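/- arXiv:2412.08502 — 4 statements merged into one kernel-verified Lean document; each statement's English description precedes it below -/
import Mathlib

section
/- For a simple symmetric random walk, $\mathbb{P}(\tau > n) = \tfrac{1}{2}\,\mathbb{P}(S_{n-1} \in \{0,1\})$ for all $n \ge 1$. -/
open MeasureTheory ProbabilityTheory Finset

/-- First time `n ≥ 1` at which the walk `S` is non-positive (`⊤` if never). -/
noncomputable def hittingTime {Ω : Type*} (S : ℕ → Ω → ℝ) (ω : Ω) : ℕ∞ :=
  sInf {m : ℕ∞ | ∃ n : ℕ, m = n ∧ 1 ≤ n ∧ S n ω ≤ 0}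

namespace SSRW

def stepZ (b : Bool) : ℤ := if b then 1 else -1

def psum (w : ℕ → Bool) (k : ℕ) : ℤ := ∑ i ∈ Finset.range k, stepZ (w i)

def ext {n : ℕ} (v : Fin n → Bool) : ℕ → Bool :=
  fun i => if h : i < n then v ⟨i, h⟩ else true

lemma psum_zero (w : ℕ → Bool) : psum w 0 = 0 := by simp [psum]

lemma psum_succ (w : ℕ → Bool) (k : ℕ) : psum w (k+1) = psum w k + stepZ (w k) := by
  simp [psum, Finset.sum_range_succ]

lemma psum_le (w : ℕ → Bool) (k : ℕ) : psum w k ≤ k := by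
  induction k with
  | zero => simp [psum_zero]
  | succ k ih =>
      have : stepZ (w k) ≤ 1 := by cases h : w k <;> simp [stepZ]
      rw [psum_succ]; push_cast; omega

lemma psum_shift (w : ℕ → Bool) (k : ℕ) :
    psum w (k+1) = stepZ (w 0) + psum (fun i => w (i+1)) k := by
  simp [psum, Finset.sum_range_succ']; ring

lemma ext_lt {n : ℕ} (v : Fin n → Bool) {i : ℕ} (h : i < n) : ext v i = v ⟨i, h⟩ := by
  simp [ext, h]

lemma psum_ext_snoc {m : ℕ} (u : Fin m → Bool) (b : Bool) {k : ℕ} (hk : k ≤ m) :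
    psum (ext (Fin.snoc u b)) k = psum (ext u) k := by
  unfold psum
  apply Finset.sum_congr rfl
  intro i hi
  have hi' : i < m := lt_of_lt_of_le (Finset.mem_range.mp hi) hk
  have h1 : ext (Fin.snoc u b : Fin (m+1) → Bool) i = (Fin.snoc u b : Fin (m+1) → Bool) ⟨i, Nat.lt_succ_of_lt hi'⟩ :=
    ext_lt _ (Nat.lt_succ_of_lt hi')
  have h2 : (Fin.snoc u b : Fin (m+1) → Bool) ⟨i, Nat.lt_succ_of_lt hi'⟩ = u ⟨i, hi'⟩ := by
    have : (⟨i, Nat.lt_succ_of_lt hi'⟩ : Fin (m+1)) = Fin.castSucc ⟨i, hi'⟩ := rfl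
    rw [this, Fin.snoc_castSucc]
  rw [h1, h2, ext_lt u hi']

lemma psum_ext_snoc_top {m : ℕ} (u : Fin m → Bool) (b : Bool) :
    psum (ext (Fin.snoc u b)) (m+1) = psum (ext u) m + stepZ b := by
  rw [psum_succ, psum_ext_snoc u b (le_refl m)]
  congr 1
  have : ext (Fin.snoc u b : Fin (m+1) → Bool) m = (Fin.snoc u b : Fin (m+1) → Bool) (Fin.last m) :=
    ext_lt _ (Nat.lt_succ_self m)
  rw [this, Fin.snoc_last]

lemma psum_ext_cons {m : ℕ} (u : Fin m → Bool) (b : Bool) (k : ℕ) :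
    psum (ext (Fin.cons b u : Fin (m+1) → Bool)) (k+1) = stepZ b + psum (ext u) k := by
  rw [psum_shift]
  refine congrArg₂ (· + ·) ?_ ?_
  · congr 1
  · unfold psum
    apply Finset.sum_congr rfl
    intro i _
    congr 1
    show ext (Fin.cons b u) (i + 1) = ext u i
    by_cases hi : i < m
    · rw [ext_lt _ (show i + 1 < m + 1 by omega), ext_lt _ hi]
      have h2 : (⟨i + 1, show i + 1 < m + 1 by omega⟩ : Fin (m+1)) = Fin.succ ⟨i, hi⟩ := rfl
      rw [h2, Fin.cons_succ]
    · have h1 : ¬ (i + 1 < m + 1) := by omega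
      simp [ext, hi, h1]

noncomputable section
def pp (m : ℕ) (j : ℤ) : ℕ :=
  (Finset.univ.filter fun v : Fin m → Bool => psum (ext v) m = j).card

def NN (m : ℕ) (j : ℤ) : ℕ :=
  (Finset.univ.filter fun v : Fin m → Bool =>
    (∀ k ≤ m, 0 ≤ psum (ext v) k) ∧ psum (ext v) m = j).card

def MM (m : ℕ) : ℕ :=
  (Finset.univ.filter fun v : Fin m → Bool => ∀ k ≤ m, 0 ≤ psum (ext v) k).card

def AA (n : ℕ) : ℕ :=
  (Finset.univ.filter fun v : Fin n → Bool => ∀ k, k ≤ n → 1 ≤ k → 1 ≤ psum (ext v) k).card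

def BB (m : ℕ) : ℕ :=
  (Finset.univ.filter fun v : Fin m → Bool => psum (ext v) m = 0 ∨ psum (ext v) m = 1).card

lemma card_filter_snoc {m : ℕ} (Pr : (Fin (m+1) → Bool) → Prop) [DecidablePred Pr] :
    (Finset.univ.filter Pr).card
      = (Finset.univ.filter fun u : Fin m → Bool => Pr (Fin.snoc u false)).card
        + (Finset.univ.filter fun u : Fin m → Bool => Pr (Fin.snoc u true)).card := by
  rw [Finset.card_filter, Finset.card_filter, Finset.card_filter]
  rw [← Equiv.sum_comp (Fin.snocEquiv (fun _ => Bool)) (fun v => if Pr v then 1 else 0)]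
  rw [Fintype.sum_prod_type]
  rw [Fintype.sum_bool]
  simp [Fin.snocEquiv, add_comm]
  rw [Finset.card_filter, Finset.card_filter]
  rfl

lemma card_filter_cons {m : ℕ} (Pr : (Fin (m+1) → Bool) → Prop) [DecidablePred Pr] :
    (Finset.univ.filter Pr).card
      = (Finset.univ.filter fun u : Fin m → Bool => Pr (Fin.cons false u)).card
        + (Finset.univ.filter fun u : Fin m → Bool => Pr (Fin.cons true u)).card := by
  rw [Finset.card_filter, Finset.card_filter, Finset.card_filter]
  rw [← Equiv.sum_comp (Fin.consEquiv (fun _ => Bool)) (fun v => if Pr v then 1 else 0)]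
  rw [Fintype.sum_prod_type]
  rw [Fintype.sum_bool]
  simp [Fin.consEquiv, add_comm]
  rw [Finset.card_filter, Finset.card_filter]
  rfl


lemma pp_zero (j : ℤ) : pp 0 j = if j = 0 then 1 else 0 := by
  unfold pp
  by_cases h : j = 0
  · subst h
    rw [if_pos rfl, Finset.filter_true_of_mem]
    · simp
    · intro v _; rw [psum_zero]
  · rw [if_neg h, Finset.filter_false_of_mem, Finset.card_empty]
    intro v _; rw [psum_zero]; omega

lemma pp_succ (m : ℕ) (j : ℤ) : pp (m+1) j = pp m (j-1) + pp m (j+1) := by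
  unfold pp
  rw [card_filter_snoc, add_comm]
  congr 1
  · refine congrArg Finset.card (Finset.filter_congr ?_)
    intro u _
    rw [psum_ext_snoc_top]
    simp only [stepZ, if_pos, eq_self_iff_true, if_true]
    omega
  · refine congrArg Finset.card (Finset.filter_congr ?_)
    intro u _
    rw [psum_ext_snoc_top]
    simp only [stepZ, Bool.false_eq_true, if_false]
    omega

lemma pp_neg (m : ℕ) : ∀ j : ℤ, pp m (-j) = pp m j := by
  induction m with
  | zero =>
      intro j
      rw [pp_zero, pp_zero]
      simp [neg_eq_zero]
  | succ m ih =>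
      intro j
      rw [pp_succ, pp_succ]
      have h1 : -j - 1 = -(j+1) := by ring
      have h2 : -j + 1 = -(j-1) := by ring
      rw [h1, h2, ih, ih, add_comm]

lemma pp_eq_zero_of_gt {m : ℕ} {j : ℤ} (h : (m:ℤ) < j) : pp m j = 0 := by
  unfold pp
  rw [Finset.filter_false_of_mem, Finset.card_empty]
  intro v _
  have := psum_le (ext v) m
  omega

lemma NN_zero (j : ℤ) : NN 0 j = if j = 0 then 1 else 0 := by
  unfold NN
  by_cases h : j = 0
  · subst h
    rw [if_pos rfl, Finset.filter_true_of_mem]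
    · simp
    · intro v _
      refine ⟨fun k hk => ?_, by rw [psum_zero]⟩
      interval_cases k
      rw [psum_zero]
  · rw [if_neg h, Finset.filter_false_of_mem, Finset.card_empty]
    intro v _
    rw [psum_zero]
    rintro ⟨-, h0⟩
    omega

lemma NN_neg {m : ℕ} {j : ℤ} (hj : j < 0) : NN m j = 0 := by
  unfold NN
  rw [Finset.filter_false_of_mem, Finset.card_empty]
  rintro v _ ⟨hall, hfin⟩
  have := hall m le_rfl
  omega

lemma NN_succ (m : ℕ) {j : ℤ} (hj : 0 ≤ j) :
    NN (m+1) j = NN m (j-1) + NN m (j+1) := by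
  unfold NN
  rw [card_filter_snoc, add_comm]
  congr 1
  · refine congrArg Finset.card (Finset.filter_congr ?_)
    intro u _
    constructor
    · rintro ⟨hall, hfin⟩
      rw [psum_ext_snoc_top] at hfin
      simp only [stepZ, if_pos, eq_self_iff_true, if_true] at hfin
      refine ⟨fun k hk => ?_, by omega⟩
      have := hall k (by omega)
      rwa [psum_ext_snoc u true hk] at this
    · rintro ⟨hall, hfin⟩
      refine ⟨fun k hk => ?_, ?_⟩
      · rcases Nat.lt_or_ge k (m+1) with h | h
        · rw [psum_ext_snoc u true (by omega)]
          exact hall k (by omega)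
        · have hk' : k = m + 1 := by omega
          subst hk'
          rw [psum_ext_snoc_top, hfin]
          simp only [stepZ, if_pos, eq_self_iff_true, if_true]
          omega
      · rw [psum_ext_snoc_top, hfin]
        simp only [stepZ, if_pos, eq_self_iff_true, if_true]
        omega
  · refine congrArg Finset.card (Finset.filter_congr ?_)
    intro u _
    constructor
    · rintro ⟨hall, hfin⟩
      rw [psum_ext_snoc_top] at hfin
      simp only [stepZ, Bool.false_eq_true, if_false] at hfin
      refine ⟨fun k hk => ?_, by omega⟩
      have := hall k (by omega)
      rwa [psum_ext_snoc u false hk] at this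
    · rintro ⟨hall, hfin⟩
      refine ⟨fun k hk => ?_, ?_⟩
      · rcases Nat.lt_or_ge k (m+1) with h | h
        · rw [psum_ext_snoc u false (by omega)]
          exact hall k (by omega)
        · have hk' : k = m + 1 := by omega
          subst hk'
          rw [psum_ext_snoc_top, hfin]
          simp only [stepZ, Bool.false_eq_true, if_false]
          omega
      · rw [psum_ext_snoc_top, hfin]
        simp only [stepZ, Bool.false_eq_true, if_false]
        omega

lemma NN_pp : ∀ m : ℕ, ∀ j : ℤ, -1 ≤ j → NN m j + pp m (j+2) = pp m j := by
  intro m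
  induction m with
  | zero =>
      intro j hj
      rw [NN_zero, pp_zero, pp_zero]
      split_ifs <;> omega
  | succ m ih =>
      intro j hj
      rcases eq_or_lt_of_le hj with h | h
      · have hj' : j = -1 := h.symm
        subst hj'
        rw [NN_neg (by omega)]
        have : (-1 : ℤ) + 2 = 1 := by ring
        rw [this]
        have := pp_neg (m+1) 1
        simpa using this.symm
      · have hj0 : 0 ≤ j := by omega
        rw [NN_succ m hj0, pp_succ, pp_succ]
        have e1 : j + 2 - 1 = (j - 1) + 2 := by ring
        have e2 : j + 2 + 1 = (j + 1) + 2 := by ring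
        rw [e1, e2]
        have i1 := ih (j-1) (by omega)
        have i2 := ih (j+1) (by omega)
        omega

lemma MM_sum (m : ℕ) : MM m = ∑ j ∈ Finset.range (m+1), NN m (j:ℤ) := by
  unfold MM
  rw [Finset.card_eq_sum_card_fiberwise
    (f := fun v : Fin m → Bool => (psum (ext v) m).toNat) (t := Finset.range (m+1))]
  · apply Finset.sum_congr rfl
    intro j _
    rw [Finset.filter_filter]
    unfold NN
    apply Finset.card_bij (fun v _ => v) _ (fun _ _ _ _ h => h)
      (fun v hv => ⟨v, by
        simp only [Finset.mem_filter, Finset.mem_univ, true_and] at hv ⊢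
        have h0 := hv.1 m le_rfl
        refine ⟨hv.1, ?_⟩
        omega, rfl⟩)
    intro v hv
    simp only [Finset.mem_filter, Finset.mem_univ, true_and] at hv ⊢
    have h0 := hv.1 m le_rfl
    refine ⟨hv.1, ?_⟩
    omega
  · intro v hv
    simp only [Finset.mem_coe, Finset.mem_filter, Finset.mem_univ, true_and] at hv ⊢
    have h0 := hv m le_rfl
    have h1 := psum_le (ext v) m
    rw [Finset.mem_range]
    omega

lemma tel2 (F : ℤ → ℤ) : ∀ n : ℕ, ∑ j ∈ Finset.range n, (F (j:ℤ) - F ((j:ℤ)+2))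
    = F 0 + F 1 - F (n:ℤ) - F ((n:ℤ)+1) := by
  intro n
  induction n with
  | zero => simp
  | succ n ih =>
      rw [Finset.sum_range_succ, ih]
      have e1 : ((n+1:ℕ):ℤ) = (n:ℤ)+1 := by push_cast; ring
      rw [e1]
      have e2 : (n:ℤ)+1+1 = (n:ℤ)+2 := by ring
      rw [e2]
      ring

lemma MM_eq (m : ℕ) : MM m = pp m 0 + pp m 1 := by
  have key : (MM m : ℤ) = (pp m 0 : ℤ) + pp m 1 := by
    rw [MM_sum]
    push_cast
    have h1 : ∀ j ∈ Finset.range (m+1), (NN m (j:ℤ) : ℤ)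
        = (pp m (j:ℤ) : ℤ) - (pp m ((j:ℤ)+2) : ℤ) := by
      intro j _
      have hnp := NN_pp m (j:ℤ) (by omega)
      have hnp' : (NN m (j:ℤ) : ℤ) + pp m ((j:ℤ)+2) = pp m (j:ℤ) := by exact_mod_cast hnp
      omega
    rw [Finset.sum_congr rfl h1]
    have t : (∑ j ∈ Finset.range (m+1), ((pp m (j:ℤ) : ℤ) - (pp m ((j:ℤ)+2) : ℤ)))
        = (pp m 0 : ℤ) + pp m 1 - pp m ((m+1 : ℕ):ℤ) - pp m (((m+1 : ℕ):ℤ)+1) :=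
      tel2 (fun i => (pp m i : ℤ)) (m+1)
    have z1 : pp m ((m+1:ℕ):ℤ) = 0 := pp_eq_zero_of_gt (by push_cast; omega)
    have z2 : pp m (((m+1:ℕ):ℤ)+1) = 0 := pp_eq_zero_of_gt (by push_cast; omega)
    rw [t, z1, z2]
    ring
  exact_mod_cast key

lemma AA_succ (m : ℕ) : AA (m+1) = MM m := by
  unfold AA MM
  rw [card_filter_cons]
  have hfalse : (Finset.univ.filter fun u : Fin m → Bool =>
      ∀ k, k ≤ m+1 → 1 ≤ k → 1 ≤ psum (ext (Fin.cons false u : Fin (m+1) → Bool)) k) = ∅ := by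
    apply Finset.filter_false_of_mem
    intro u _ h
    have h1 : 1 ≤ psum (ext (Fin.cons false u : Fin (m+1) → Bool)) 1 := h 1 (by omega) le_rfl
    have h2 : psum (ext (Fin.cons false u : Fin (m+1) → Bool)) 1 = -1 := by
      have := psum_ext_cons u false 0
      simpa [psum_zero, stepZ] using this
    omega
  rw [hfalse, Finset.card_empty, zero_add]
  refine congrArg Finset.card (Finset.filter_congr ?_)
  intro u _
  constructor
  · intro h k hk
    have := h (k+1) (by omega) (by omega)
    rw [psum_ext_cons] at this
    simp only [stepZ, if_pos, eq_self_iff_true, if_true] at this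
    omega
  · intro h k hk2 hk1
    obtain ⟨k', rfl⟩ : ∃ k', k = k' + 1 := ⟨k - 1, by omega⟩
    rw [psum_ext_cons]
    simp only [stepZ, if_pos, eq_self_iff_true, if_true]
    have := h k' (by omega)
    omega

lemma BB_eq (m : ℕ) : BB m = pp m 0 + pp m 1 := by
  unfold BB pp
  rw [Finset.filter_or, Finset.card_union_of_disjoint]
  rw [Finset.disjoint_left]
  intro v h0 h1
  simp only [Finset.mem_filter, Finset.mem_univ, true_and] at h0 h1
  omega

lemma AA_eq_BB (m : ℕ) : AA (m+1) = BB m := by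
  rw [AA_succ, MM_eq, BB_eq]

def stepR (b : Bool) : ℝ := if b then 1 else -1

lemma stepR_eq_cast (b : Bool) : stepR b = ((stepZ b : ℤ) : ℝ) := by
  cases b <;> simp [stepR, stepZ]

section Prob

open MeasureTheory ProbabilityTheory
open scoped ENNReal

variable {Ω : Type*} [MeasurableSpace Ω] (P : Measure Ω) [IsProbabilityMeasure P]
variable (X : ℕ → Ω → ℝ)

def Ev (n : ℕ) (v : Fin n → Bool) : Set Ω :=
  ⋂ i ∈ Finset.range n, X i ⁻¹' {stepR (ext v i)}

variable {P X}

lemma half (hdist : ∀ i, IdentDistrib (X i) (X 0) P P)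
    (h1 : P {ω | X 0 ω = 1} = 1/2) (h2 : P {ω | X 0 ω = -1} = 1/2) :
    ∀ i : ℕ, ∀ b : Bool, P (X i ⁻¹' {stepR b}) = 1/2 := by
  intro i b
  have h := (hdist i).measure_mem_eq (measurableSet_singleton (stepR b))
  rw [h]
  cases b
  · simpa [stepR, Set.preimage] using h2
  · simpa [stepR, Set.preimage] using h1

lemma meas_Ev (hindep : iIndepFun X P)
    (hdist : ∀ i, IdentDistrib (X i) (X 0) P P)
    (h1 : P {ω | X 0 ω = 1} = 1/2) (h2 : P {ω | X 0 ω = -1} = 1/2)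
    (n : ℕ) (v : Fin n → Bool) :
    P (Ev X n v) = (1/2)^n := by
  rw [Ev, hindep.meas_biInter (fun i _ => ⟨{stepR (ext v i)}, measurableSet_singleton _, rfl⟩)]
  have : ∀ i ∈ Finset.range n, P (X i ⁻¹' {stepR (ext v i)}) = 1/2 := by
    intro i _
    exact half hdist h1 h2 i (ext v i)
  rw [Finset.prod_congr rfl this, Finset.prod_const, Finset.card_range]

lemma Ev_measurable (hmeas : ∀ i, Measurable (X i)) (n : ℕ) (v : Fin n → Bool) :
    MeasurableSet (Ev X n v) := by
  apply MeasurableSet.biInter (Finset.range n).countable_toSet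
  intro i _
  exact hmeas i (measurableSet_singleton _)

lemma mem_Ev {n : ℕ} {v : Fin n → Bool} {ω : Ω} (h : ω ∈ Ev X n v) :
    ∀ i : Fin n, X i ω = stepR (v i) := by
  intro i
  have hi : (i : ℕ) ∈ Finset.range n := Finset.mem_range.mpr i.isLt
  have := Set.mem_iInter₂.mp h i hi
  simp only [Set.mem_preimage, Set.mem_singleton_iff] at this
  rwa [ext_lt v i.isLt, Fin.eta] at this

lemma Ev_disjoint {n : ℕ} {v w : Fin n → Bool} (hvw : v ≠ w) :
    Disjoint (Ev X n v) (Ev X n w) := by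
  rw [Set.disjoint_left]
  intro ω hv hw
  obtain ⟨i, hi⟩ := Function.ne_iff.mp hvw
  have e1 := mem_Ev hv i
  have e2 := mem_Ev hw i
  apply hi
  have hst : stepR (v i) = stepR (w i) := by rw [← e1, ← e2]
  cases hb : v i <;> cases hc : w i
  · rfl
  · rw [hb, hc] at hst; norm_num [stepR] at hst
  · rw [hb, hc] at hst; norm_num [stepR] at hst
  · rfl

lemma cylinder_prob (hmeas : ∀ i, Measurable (X i))
    (hindep : iIndepFun X P)
    (hdist : ∀ i, IdentDistrib (X i) (X 0) P P)
    (h1 : P {ω | X 0 ω = 1} = 1/2) (h2 : P {ω | X 0 ω = -1} = 1/2)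
    (n : ℕ) (A : Set Ω) (Q : (Fin n → Bool) → Prop) [DecidablePred Q]
    (hAQ : ∀ (v : Fin n → Bool) (ω : Ω),
      (∀ i : Fin n, X i ω = stepR (v i)) → (ω ∈ A ↔ Q v)) :
    P A = (Finset.univ.filter Q).card * (1/2)^n := by
  classical
  -- the good set
  set G : Set Ω := {ω | ∀ i ∈ Finset.range n, X i ω = 1 ∨ X i ω = -1} with hG
  have hnull : ∀ i : ℕ, P ((X i ⁻¹' {(1:ℝ)} ∪ X i ⁻¹' {(-1:ℝ)})ᶜ) = 0 := by
    intro i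
    have hs : MeasurableSet (X i ⁻¹' {(1:ℝ)} ∪ X i ⁻¹' {(-1:ℝ)}) :=
      ((hmeas i) (measurableSet_singleton _)).union ((hmeas i) (measurableSet_singleton _))
    have hdisj : Disjoint (X i ⁻¹' {(1:ℝ)}) (X i ⁻¹' {(-1:ℝ)}) := by
      rw [Set.disjoint_left]
      intro ω hω1 hω2
      simp only [Set.mem_preimage, Set.mem_singleton_iff] at hω1 hω2
      rw [hω1] at hω2; norm_num at hω2
    have hone : P (X i ⁻¹' {(1:ℝ)} ∪ X i ⁻¹' {(-1:ℝ)}) = 1 := by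
      rw [measure_union hdisj ((hmeas i) (measurableSet_singleton _))]
      have e1 := half hdist h1 h2 i true
      have e2 := half hdist h1 h2 i false
      simp only [stepR, if_true, Bool.false_eq_true, if_false] at e1 e2
      rw [e1, e2, ENNReal.div_add_div_same]
      rw [one_add_one_eq_two]
      exact ENNReal.div_self (two_ne_zero) (ENNReal.ofNat_ne_top)
    rw [measure_compl hs (measure_ne_top _ _), hone, measure_univ, tsub_self]
  have hGc : P Gᶜ = 0 := by
    have hsub : Gᶜ ⊆ ⋃ i : ℕ, (X i ⁻¹' {(1:ℝ)} ∪ X i ⁻¹' {(-1:ℝ)})ᶜ := by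
      intro ω hω
      simp only [Set.mem_compl_iff, hG, Set.mem_setOf_eq] at hω
      push_neg at hω
      obtain ⟨i, hi, hne⟩ := hω
      refine Set.mem_iUnion.mpr ⟨i, ?_⟩
      simp only [Set.mem_compl_iff, Set.mem_union, Set.mem_preimage, Set.mem_singleton_iff]
      tauto
    apply measure_mono_null hsub
    rw [measure_iUnion_null_iff]
    intro i
    exact hnull i
  -- decomposition
  have hPA : P A = P (A ∩ G) := (measure_inter_conull hGc).symm
  have hsub : A ∩ G ⊆ ⋃ v ∈ (Finset.univ : Finset (Fin n → Bool)), (A ∩ Ev X n v) := by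
    rintro ω ⟨hωA, hωG⟩
    refine Set.mem_biUnion (Finset.mem_univ (fun i : Fin n => if X i ω = 1 then true else false)) ?_
    refine ⟨hωA, ?_⟩
    rw [Ev, Set.mem_iInter₂]
    intro i hi
    have hi' : i < n := Finset.mem_range.mp hi
    simp only [Set.mem_preimage, Set.mem_singleton_iff]
    rw [ext_lt _ hi']
    rcases hωG i hi with h | h
    · rw [h]; norm_num [stepR]
    · rw [h]; norm_num [stepR]
  have hsup : ⋃ v ∈ (Finset.univ : Finset (Fin n → Bool)), (A ∩ Ev X n v) ⊆ A := by
    intro ω hω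
    obtain ⟨v, -, hv⟩ := Set.mem_iUnion₂.mp hω
    exact hv.1
  have hU : P A = P (⋃ v ∈ (Finset.univ : Finset (Fin n → Bool)), (A ∩ Ev X n v)) := by
    apply le_antisymm
    · rw [hPA]; exact measure_mono hsub
    · exact measure_mono hsup
  -- each piece
  have hAE : ∀ v : Fin n → Bool, A ∩ Ev X n v = if Q v then Ev X n v else ∅ := by
    intro v
    by_cases hq : Q v
    · rw [if_pos hq]
      apply Set.inter_eq_right.mpr
      intro ω hω
      exact (hAQ v ω (mem_Ev hω)).mpr hq
    · rw [if_neg hq]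
      ext ω
      simp only [Set.mem_inter_iff, Set.mem_empty_iff_false, iff_false]
      rintro ⟨hωA, hωE⟩
      exact hq ((hAQ v ω (mem_Ev hωE)).mp hωA)
  have hsum : P (⋃ v ∈ (Finset.univ : Finset (Fin n → Bool)), (A ∩ Ev X n v))
      = ∑ v : Fin n → Bool, P (A ∩ Ev X n v) := by
    apply measure_biUnion_finset
    · intro v _ w _ hvw
      refine Set.disjoint_of_subset Set.inter_subset_right Set.inter_subset_right ?_
      exact Ev_disjoint hvw
    · intro v _
      rw [hAE v]
      split
      · exact Ev_measurable hmeas n v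
      · exact MeasurableSet.empty
  rw [hU, hsum]
  have : ∀ v : Fin n → Bool, P (A ∩ Ev X n v) = if Q v then (1/2 : ℝ≥0∞)^n else 0 := by
    intro v
    rw [hAE v]
    split
    · exact meas_Ev hindep hdist h1 h2 n v
    · exact measure_empty
  rw [Finset.sum_congr rfl (fun v _ => this v), Finset.sum_ite, Finset.sum_const,
    Finset.sum_const_zero, add_zero, nsmul_eq_mul]

end Prob

end

end SSRW

open scoped ENNReal

/-- survival probability of the simple symmetric random walk. -/
theorem ssrw_survival
    {Ω : Type*} [MeasurableSpace Ω] (P : Measure Ω) [IsProbabilityMeasure P]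
    (X : ℕ → Ω → ℝ) (hmeas : ∀ i, Measurable (X i))
    (hindep : iIndepFun X P)
    (hdist : ∀ i, IdentDistrib (X i) (X 0) P P)
    (h1 : P {ω | X 0 ω = 1} = 1/2) (h2 : P {ω | X 0 ω = -1} = 1/2)
    (S : ℕ → Ω → ℝ) (hS : ∀ n ω, S n ω = ∑ i ∈ range n, X i ω)
    (n : ℕ) (hn : 1 ≤ n) :
    (P {ω | (n : ℕ∞) < hittingTime S ω}).toReal
      = (1/2) * (P {ω | S (n-1) ω = 0 ∨ S (n-1) ω = 1}).toReal := by
  have hSk : ∀ (N : ℕ) (v : Fin N → Bool) (ω : Ω),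
      (∀ i : Fin N, X i ω = SSRW.stepR (v i)) →
      ∀ k, k ≤ N → S k ω = ((SSRW.psum (SSRW.ext v) k : ℤ) : ℝ) := by
    intro N v ω hv k hk
    rw [hS]
    unfold SSRW.psum
    push_cast
    apply Finset.sum_congr rfl
    intro i hi
    have hi' : i < N := lt_of_lt_of_le (Finset.mem_range.mp hi) hk
    rw [SSRW.ext_lt v hi', ← SSRW.stepR_eq_cast]
    exact hv ⟨i, hi'⟩
  have hA1 : P {ω | (n : ℕ∞) < hittingTime S ω} = (SSRW.AA n) * (1/2 : ℝ≥0∞)^n := by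
    refine SSRW.cylinder_prob hmeas hindep hdist h1 h2 n _
      (fun v : Fin n → Bool => ∀ k, k ≤ n → 1 ≤ k → 1 ≤ SSRW.psum (SSRW.ext v) k) ?_
    intro v ω hv
    have hk := hSk n v ω hv
    show ((n:ℕ∞) < hittingTime S ω) ↔ _
    unfold hittingTime
    constructor
    · intro hlt k hkn hk1
      by_contra hcon
      push_neg at hcon
      have hSle : S k ω ≤ 0 := by
        rw [hk k hkn]
        exact_mod_cast (by omega : SSRW.psum (SSRW.ext v) k ≤ 0)
      have hmem : (k : ℕ∞) ∈ {m : ℕ∞ | ∃ j : ℕ, m = j ∧ 1 ≤ j ∧ S j ω ≤ 0} := ⟨k, rfl, hk1, hSle⟩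
      have hle := sInf_le hmem
      have hkn' : (k:ℕ∞) ≤ (n:ℕ∞) := by exact_mod_cast hkn
      exact absurd (lt_of_lt_of_le hlt (le_trans hle hkn')) (lt_irrefl _)
    · intro hQ
      have hstep : ((n+1 : ℕ) : ℕ∞) ≤ sInf {m : ℕ∞ | ∃ j : ℕ, m = j ∧ 1 ≤ j ∧ S j ω ≤ 0} := by
        apply le_sInf
        rintro m ⟨j, rfl, hj1, hSle⟩
        by_cases hjn : j ≤ n
        · exfalso
          have hps := hQ j hjn hj1
          have hS1 : (1:ℝ) ≤ S j ω := by
            rw [hk j hjn]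
            exact_mod_cast hps
          linarith
        · push_neg at hjn
          exact_mod_cast hjn
      exact lt_of_lt_of_le (by exact_mod_cast Nat.lt_succ_self n) hstep
  have hA2 : P {ω | S (n-1) ω = 0 ∨ S (n-1) ω = 1}
      = (SSRW.BB (n-1)) * (1/2 : ℝ≥0∞)^(n-1) := by
    refine SSRW.cylinder_prob hmeas hindep hdist h1 h2 (n-1) _
      (fun v : Fin (n-1) → Bool =>
        SSRW.psum (SSRW.ext v) (n-1) = 0 ∨ SSRW.psum (SSRW.ext v) (n-1) = 1) ?_
    intro v ω hv
    have hk := hSk (n-1) v ω hv (n-1) le_rfl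
    show (S (n-1) ω = 0 ∨ S (n-1) ω = 1) ↔ _
    rw [hk]
    constructor
    · rintro (h | h)
      · left; exact_mod_cast h
      · right; exact_mod_cast h
    · rintro (h | h)
      · left; exact_mod_cast h
      · right; exact_mod_cast h
  have hAB : SSRW.AA n = SSRW.BB (n-1) := by
    obtain ⟨m, rfl⟩ : ∃ m, n = m + 1 := ⟨n-1, by omega⟩
    simpa using SSRW.AA_eq_BB m
  rw [hA1, hA2, hAB]
  obtain ⟨m, rfl⟩ : ∃ m, n = m + 1 := ⟨n-1, by omega⟩
  simp only [Nat.add_sub_cancel]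
  rw [ENNReal.toReal_mul, ENNReal.toReal_mul, ENNReal.toReal_pow, ENNReal.toReal_pow,
    ENNReal.toReal_natCast]
  have hhalf : (1/2 : ℝ≥0∞).toReal = (1/2 : ℝ) := by
    rw [ENNReal.toReal_div]
    norm_num
  rw [hhalf]
  ring
end

section
/- Let $X_1, X_2, \ldots$ be i.i.d. with symmetric, aperiodic lattice distribution on $\mathbb{Z}$, zero mean and finite variance. With $S_n = X_1 + \cdots + X_n$ and $\tau = \inf\{n \ge 1: S_n \le 0\}$, for every integer $x \ge 1$ and $n \ge 2$: $\mathbb{P}(S_n \ge x, \tau > n) = \sum_{k=1}^{n-1} \sum_{y=0}^{\infty} \mathbb{P}(S_k = -y, \tau = k)\, \mathbb{P}(S_{n-k} \in [x-y, x+y)) + \mathbb{P}(S_n \le -x, \tau = n)$. -/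
open MeasureTheory ProbabilityTheory Finset

/-- First time `n ≥ 1` at which the integer-valued walk `S` is non-positive. -/
noncomputable def hittingTimeZ {Ω : Type*} (S : ℕ → Ω → ℤ) (ω : Ω) : ℕ∞ :=
  sInf {m : ℕ∞ | ∃ n : ℕ, m = n ∧ 1 ≤ n ∧ S n ω ≤ 0}

section AuxOrder
variable {Ω : Type*}

lemma hitZ_lt_iff (S : ℕ → Ω → ℤ) (ω : Ω) (n : ℕ) :
    (n : ℕ∞) < hittingTimeZ S ω ↔ ∀ k : ℕ, 1 ≤ k → k ≤ n → 0 < S k ω := by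
  constructor
  · intro h k h1 hk
    by_contra hle
    push_neg at hle
    have hmem : (k : ℕ∞) ∈ {m : ℕ∞ | ∃ j : ℕ, m = j ∧ 1 ≤ j ∧ S j ω ≤ 0} := ⟨k, rfl, h1, hle⟩
    have h2 := lt_of_lt_of_le h (sInf_le hmem)
    exact absurd (Nat.cast_lt.mp h2) (not_lt.mpr hk)
  · intro h
    by_contra hle
    push_neg at hle
    have hne : {m : ℕ∞ | ∃ j : ℕ, m = j ∧ 1 ≤ j ∧ S j ω ≤ 0}.Nonempty := by
      by_contra hemp
      rw [Set.not_nonempty_iff_eq_empty] at hemp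
      rw [hittingTimeZ, hemp, sInf_empty] at hle
      simp at hle
    have hmem : hittingTimeZ S ω ∈ {m : ℕ∞ | ∃ j : ℕ, m = j ∧ 1 ≤ j ∧ S j ω ≤ 0} :=
      csInf_mem hne
    obtain ⟨j, hj, h1, hj0⟩ := hmem
    rw [hj] at hle
    have hjn : j ≤ n := Nat.cast_le.mp hle
    exact absurd (h j h1 hjn) (not_lt.mpr hj0)

lemma hitZ_one_le (S : ℕ → Ω → ℤ) (ω : Ω) : 1 ≤ hittingTimeZ S ω := by
  have h := (hitZ_lt_iff S ω 0).mpr (by intro k h1 h2; omega)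
  exact Order.one_le_iff_pos.mpr (by simpa using h)

lemma hitZ_eq_iff (S : ℕ → Ω → ℤ) (ω : Ω) {k : ℕ} (hk : 1 ≤ k) :
    hittingTimeZ S ω = (k : ℕ∞) ↔ S k ω ≤ 0 ∧ ∀ j : ℕ, 1 ≤ j → j < k → 0 < S j ω := by
  constructor
  · intro h
    have h1 : ((k - 1 : ℕ) : ℕ∞) < hittingTimeZ S ω := by
      rw [h]; exact_mod_cast Nat.sub_lt (by omega) one_pos
    have h2 : ¬ ((k : ℕ∞) < hittingTimeZ S ω) := by rw [h]; exact lt_irrefl _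
    rw [hitZ_lt_iff] at h1 h2
    push_neg at h2
    obtain ⟨j, hj1, hjk, hj0⟩ := h2
    have hjeq : j = k := by
      by_contra hne
      exact absurd (h1 j hj1 (by omega)) (not_lt.mpr hj0)
    subst hjeq
    exact ⟨hj0, fun i a b => h1 i a (by omega)⟩
  · rintro ⟨h0, hpos⟩
    refine le_antisymm (sInf_le ⟨k, rfl, hk, h0⟩) ?_
    have h1 : ((k - 1 : ℕ) : ℕ∞) < hittingTimeZ S ω :=
      (hitZ_lt_iff S ω (k - 1)).mpr (fun j a b => hpos j a (by omega))
    have h2 := (ENat.add_one_le_iff (by exact_mod_cast WithTop.coe_ne_top)).mpr h1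
    calc (k : ℕ∞) = ((k - 1 : ℕ) : ℕ∞) + 1 := by
          rw [← Nat.cast_add_one]; exact_mod_cast (by omega : k = (k - 1) + 1)
      _ ≤ _ := h2

end AuxOrder

lemma measSet_comp {Ω : Type*} [MeasurableSpace Ω] {f : Ω → ℤ} (hf : Measurable f)
    (p : ℤ → Prop) : MeasurableSet {ω | p (f ω)} :=
  hf (MeasurableSet.of_discrete (s := {z | p z}))

section AuxProb
variable {Ω : Type*} [MeasurableSpace Ω] {P : Measure Ω} [IsProbabilityMeasure P]
  {X : ℕ → Ω → ℤ}

lemma addIdent {f g f' g' : Ω → ℤ} (hf : Measurable f) (hg : Measurable g)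
    (hf' : Measurable f') (hg' : Measurable g')
    (h1 : IndepFun f g P) (h2 : IndepFun f' g' P)
    (hff : IdentDistrib f f' P P) (hgg : IdentDistrib g g' P P) :
    IdentDistrib (fun ω => f ω + g ω) (fun ω => f' ω + g' ω) P P := by
  refine ⟨(hf.add hg).aemeasurable, (hf'.add hg').aemeasurable, ?_⟩
  have hadd : Measurable (fun p : ℤ × ℤ => p.1 + p.2) := Measurable.of_discrete
  have e1 : Measure.map (fun ω => f ω + g ω) P
      = Measure.map (fun p : ℤ × ℤ => p.1 + p.2) (Measure.map (fun ω => (f ω, g ω)) P) :=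
    (Measure.map_map hadd (hf.prodMk hg)).symm
  have e2 : Measure.map (fun ω => f' ω + g' ω) P
      = Measure.map (fun p : ℤ × ℤ => p.1 + p.2) (Measure.map (fun ω => (f' ω, g' ω)) P) :=
    (Measure.map_map hadd (hf'.prodMk hg')).symm
  rw [e1, e2, (indepFun_iff_map_prod_eq_prod_map_map hf.aemeasurable hg.aemeasurable).1 h1,
    (indepFun_iff_map_prod_eq_prod_map_map hf'.aemeasurable hg'.aemeasurable).1 h2,
    hff.map_eq, hgg.map_eq]

lemma indep_shift (hindep : iIndepFun X P)
    (hmeas : ∀ i, Measurable (X i)) (k m : ℕ) :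
    IndepFun (fun ω => ∑ i ∈ range m, X (k + i) ω) (X (k + m)) P := by
  have h := hindep.indepFun_finsetSum_of_notMem hmeas
    (s := (range m).image (k + ·)) (i := k + m) (by simp)
  have he : (∑ j ∈ (range m).image (k + ·), X j) = fun ω => ∑ i ∈ range m, X (k + i) ω := by
    funext ω
    rw [Finset.sum_apply]
    exact Finset.sum_image (by intro a _ b _ h; exact Nat.add_left_cancel h)
  rwa [he] at h

lemma indep_sum (hindep : iIndepFun X P)
    (hmeas : ∀ i, Measurable (X i)) (m : ℕ) :
    IndepFun (fun ω => ∑ i ∈ range m, X i ω) (X m) P := by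
  have h := hindep.indepFun_finsetSum_of_notMem hmeas (s := range m) (i := m) (by simp)
  have he : (∑ j ∈ range m, X j) = fun ω => ∑ i ∈ range m, X i ω := by
    funext ω; rw [Finset.sum_apply]
  rwa [he] at h

lemma shift_ident (hindep : iIndepFun X P)
    (hmeas : ∀ i, Measurable (X i)) (hdist : ∀ i, IdentDistrib (X i) (X 0) P P) (k m : ℕ) :
    IdentDistrib (fun ω => ∑ i ∈ range m, X (k + i) ω) (fun ω => ∑ i ∈ range m, X i ω) P P := by
  induction m with
  | zero => simp only [range_zero, sum_empty]; exact IdentDistrib.refl aemeasurable_const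
  | succ m ih =>
    have e : (fun ω => ∑ i ∈ range (m + 1), X (k + i) ω)
        = fun ω => (∑ i ∈ range m, X (k + i) ω) + X (k + m) ω := by
      funext ω; rw [Finset.sum_range_succ]
    have e0 : (fun ω => ∑ i ∈ range (m + 1), X i ω)
        = fun ω => (∑ i ∈ range m, X i ω) + X m ω := by
      funext ω; rw [Finset.sum_range_succ]
    rw [e, e0]
    exact addIdent (Finset.measurable_sum _ fun i _ => hmeas _) (hmeas _)
      (Finset.measurable_sum _ fun i _ => hmeas _) (hmeas _)
      (indep_shift hindep hmeas k m) (indep_sum hindep hmeas m) ih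
      ((hdist (k + m)).trans (hdist m).symm)

lemma neg_ident (hindep : iIndepFun X P)
    (hmeas : ∀ i, Measurable (X i)) (hdist : ∀ i, IdentDistrib (X i) (X 0) P P)
    (hsymm : IdentDistrib (X 0) (fun ω => -X 0 ω) P P) (m : ℕ) :
    IdentDistrib (fun ω => ∑ i ∈ range m, X i ω) (fun ω => -∑ i ∈ range m, X i ω) P P := by
  induction m with
  | zero =>
    simp only [range_zero, sum_empty, neg_zero]; exact IdentDistrib.refl aemeasurable_const
  | succ m ih =>
    have e0 : (fun ω => ∑ i ∈ range (m + 1), X i ω)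
        = fun ω => (∑ i ∈ range m, X i ω) + X m ω := by
      funext ω; rw [Finset.sum_range_succ]
    have e1 : (fun ω => -∑ i ∈ range (m + 1), X i ω)
        = fun ω => (-∑ i ∈ range m, X i ω) + (-X m ω) := by
      funext ω; rw [Finset.sum_range_succ, neg_add]
    rw [e0, e1]
    have hXm : IdentDistrib (X m) (fun ω => -X m ω) P P :=
      (hdist m).trans (hsymm.trans ((hdist m).symm.comp measurable_neg))
    exact addIdent (Finset.measurable_sum _ fun i _ => hmeas _) (hmeas _)
      (Finset.measurable_sum _ fun i _ => hmeas _).neg (hmeas _).neg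
      (indep_sum hindep hmeas m)
      ((indep_sum hindep hmeas m).comp measurable_neg measurable_neg) ih hXm

lemma block_step (hindep : iIndepFun X P)
    (hmeas : ∀ i, Measurable (X i)) (hdist : ∀ i, IdentDistrib (X i) (X 0) P P)
    (S : ℕ → Ω → ℤ) (hS : ∀ n ω, S n ω = ∑ i ∈ range n, X i ω)
    {k : ℕ} (hk : 1 ≤ k) (m : ℕ) (y : ℕ) (B : Set ℤ) :
    P ({ω | S k ω = -(y : ℤ) ∧ hittingTimeZ S ω = (k : ℕ∞)}
        ∩ {ω | (∑ i ∈ range m, X (k + i) ω) ∈ B})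
      = P {ω | S k ω = -(y : ℤ) ∧ hittingTimeZ S ω = (k : ℕ∞)} * P {ω | S m ω ∈ B} := by
  classical
  set V : Ω → (Fin k → ℤ) := fun ω i => X i ω with hV
  set W : Ω → (Fin m → ℤ) := fun ω i => X (k + i) ω with hW
  have hindepVW : IndepFun V W P := by
    have h := hindep.indepFun_finset (range k) (Finset.Ico k (k + m))
      (by simp only [Finset.disjoint_left, Finset.mem_range, Finset.mem_Ico]; omega) hmeas
    have r1 : Measurable (fun (v : (i : (range k : Finset ℕ)) → ℤ) (i : Fin k) =>
        v ⟨i, Finset.mem_range.mpr i.isLt⟩) :=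
      measurable_pi_lambda _ (fun i => measurable_pi_apply _)
    have r2 : Measurable (fun (v : (i : (Finset.Ico k (k + m) : Finset ℕ)) → ℤ) (i : Fin m) =>
        v ⟨k + i, Finset.mem_Ico.mpr ⟨Nat.le_add_right _ _, by omega⟩⟩) :=
      measurable_pi_lambda _ (fun i => measurable_pi_apply _)
    exact h.comp r1 r2
  set g : (Fin k → ℤ) → ℕ → ℤ :=
    fun v j => ∑ i ∈ range j, (if h : i < k then v ⟨i, h⟩ else 0) with hg
  have hgmeas : ∀ j, Measurable (fun v => g v j) := by
    intro j
    apply Finset.measurable_sum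
    intro i _
    by_cases h : i < k
    · simp only [dif_pos h]; exact measurable_pi_apply _
    · simp only [dif_neg h]; exact measurable_const
  have hgS : ∀ ω, ∀ j ≤ k, g (V ω) j = S j ω := by
    intro ω j hj
    rw [hS]
    refine Finset.sum_congr rfl (fun i hi => ?_)
    have hik : i < k := lt_of_lt_of_le (Finset.mem_range.mp hi) hj
    rw [dif_pos hik]
  set A' : Set (Fin k → ℤ) := {v | g v k = -(y : ℤ) ∧ ∀ j ∈ Finset.Ico 1 k, 0 < g v j} with hA'
  have hAeq : {ω | S k ω = -(y : ℤ) ∧ hittingTimeZ S ω = (k : ℕ∞)} = V ⁻¹' A' := by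
    ext ω
    simp only [Set.mem_setOf_eq, Set.mem_preimage, hA', Finset.mem_Ico]
    rw [hitZ_eq_iff S ω hk]
    constructor
    · rintro ⟨hy, _, hpos⟩
      refine ⟨by rw [hgS ω k le_rfl]; exact hy, fun j hj => ?_⟩
      rw [hgS ω j (le_of_lt hj.2)]
      exact hpos j hj.1 hj.2
    · rintro ⟨hy, hpos⟩
      rw [hgS ω k le_rfl] at hy
      refine ⟨hy, by rw [hy]; omega, fun j h1 h2 => ?_⟩
      have h := hpos j ⟨h1, h2⟩
      rwa [hgS ω j (le_of_lt h2)] at h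
  have hA'meas : MeasurableSet A' := by
    have he : A' = (fun v => g v k) ⁻¹' {-(y : ℤ)}
        ∩ ⋂ j ∈ Finset.Ico 1 k, (fun v => g v j) ⁻¹' (Set.Ioi 0) := by
      ext v
      simp only [hA', Set.mem_setOf_eq, Set.mem_inter_iff, Set.mem_preimage,
        Set.mem_singleton_iff, Set.mem_iInter, Set.mem_Ioi]
    rw [he]
    exact ((hgmeas k) (measurableSet_singleton _)).inter
      (MeasurableSet.biInter (Finset.Ico 1 k : Finset ℕ).countable_toSet
        (fun j _ => (hgmeas j) MeasurableSet.of_discrete))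
  have hBeq : {ω | (∑ i ∈ range m, X (k + i) ω) ∈ B}
      = W ⁻¹' ((fun v : Fin m → ℤ => ∑ i, v i) ⁻¹' B) := by
    ext ω
    simp only [Set.mem_setOf_eq, Set.mem_preimage]
    rw [Fin.sum_univ_eq_sum_range (fun i => X (k + i) ω) m]
  have hsummeas : Measurable (fun v : Fin m → ℤ => ∑ i, v i) :=
    Finset.measurable_sum _ (fun i _ => measurable_pi_apply i)
  rw [hAeq, hBeq,
    hindepVW.measure_inter_preimage_eq_mul _ _ hA'meas (hsummeas MeasurableSet.of_discrete)]
  congr 1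
  have hid := shift_ident hindep hmeas hdist k m
  have h := hid.measure_mem_eq (s := B) MeasurableSet.of_discrete
  have e1 : (fun ω => ∑ i ∈ range m, X (k + i) ω) ⁻¹' B
      = W ⁻¹' ((fun v : Fin m → ℤ => ∑ i, v i) ⁻¹' B) := by
    rw [← hBeq]; rfl
  have e2 : (fun ω => ∑ i ∈ range m, X i ω) ⁻¹' B = {ω | S m ω ∈ B} := by
    ext ω; simp only [Set.mem_preimage, Set.mem_setOf_eq, hS]
  rw [e1, e2] at h
  exact h

end AuxProb

/-- reflection-type representation for symmetric aperiodic lattice walks. -/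
theorem symmetric_lattice_representation
    {Ω : Type*} [MeasurableSpace Ω] (P : Measure Ω) [IsProbabilityMeasure P]
    (X : ℕ → Ω → ℤ) (hmeas : ∀ i, Measurable (X i))
    (hindep : iIndepFun X P)
    (hdist : ∀ i, IdentDistrib (X i) (X 0) P P)
    (hsymm : IdentDistrib (X 0) (fun ω => -X 0 ω) P P)
    (hmean : ∫ ω, (X 0 ω : ℝ) ∂P = 0)
    (hvar : Integrable (fun ω => (X 0 ω : ℝ)^2) P)
    (haperiodic : ∀ d : ℤ, 0 < d → (∀ᵐ ω ∂P, d ∣ X 0 ω) → d = 1)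
    (S : ℕ → Ω → ℤ) (hS : ∀ n ω, S n ω = ∑ i ∈ range n, X i ω)
    (x : ℤ) (hx : 1 ≤ x) (n : ℕ) (hn : 2 ≤ n) :
    (P {ω | x ≤ S n ω ∧ (n : ℕ∞) < hittingTimeZ S ω}).toReal
      = (∑ k ∈ Icc 1 (n-1), ∑' y : ℕ,
          (P {ω | S k ω = -(y : ℤ) ∧ hittingTimeZ S ω = (k : ℕ∞)}).toReal
            * (P {ω | x - (y : ℤ) ≤ S (n - k) ω ∧ S (n - k) ω < x + (y : ℤ)}).toReal)
        + (P {ω | S n ω ≤ -x ∧ hittingTimeZ S ω = (n : ℕ∞)}).toReal := by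
  have hSm : ∀ m, Measurable (S m) := by
    intro m
    have e : S m = fun ω => ∑ i ∈ range m, X i ω := funext (hS m)
    rw [e]; exact Finset.measurable_sum _ (fun i _ => hmeas i)
  have hτmeas : ∀ k : ℕ, 1 ≤ k → MeasurableSet {ω | hittingTimeZ S ω = (k : ℕ∞)} := by
    intro k hk
    have e : {ω | hittingTimeZ S ω = (k : ℕ∞)}
        = {ω | S k ω ≤ 0} ∩ ⋂ j ∈ Finset.Ico 1 k, {ω | 0 < S j ω} := by
      ext ω
      simp only [Set.mem_setOf_eq, Set.mem_inter_iff, Set.mem_iInter, Finset.mem_Ico]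
      rw [hitZ_eq_iff S ω hk]
      constructor
      · rintro ⟨a, b⟩; exact ⟨a, fun j hj => b j hj.1 hj.2⟩
      · rintro ⟨a, b⟩; exact ⟨a, fun j h1 h2 => b j ⟨h1, h2⟩⟩
    rw [e]
    exact (measSet_comp (hSm k) (fun z => z ≤ 0)).inter
      (MeasurableSet.biInter (Finset.Ico 1 k : Finset ℕ).countable_toSet
        (fun j _ => measSet_comp (hSm j) (fun z => 0 < z)))
  have hA_meas : ∀ k : ℕ, 1 ≤ k → ∀ y : ℕ,
      MeasurableSet {ω | S k ω = -(y : ℤ) ∧ hittingTimeZ S ω = (k : ℕ∞)} := by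
    intro k hk y
    rw [Set.setOf_and]
    exact (measSet_comp (hSm k) (fun z => z = -(y : ℤ))).inter (hτmeas k hk)
  have hydecomp : ∀ k : ℕ, 1 ≤ k → ∀ Q : Set Ω, MeasurableSet Q →
      P (Q ∩ {ω | hittingTimeZ S ω = (k : ℕ∞)})
        = ∑' y : ℕ, P (Q ∩ {ω | S k ω = -(y : ℤ) ∧ hittingTimeZ S ω = (k : ℕ∞)}) := by
    intro k hk Q hQ
    have hU : Q ∩ {ω | hittingTimeZ S ω = (k : ℕ∞)}
        = ⋃ y : ℕ, Q ∩ {ω | S k ω = -(y : ℤ) ∧ hittingTimeZ S ω = (k : ℕ∞)} := by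
      ext ω
      simp only [Set.mem_inter_iff, Set.mem_iUnion, Set.mem_setOf_eq]
      constructor
      · rintro ⟨hQω, hτ⟩
        have h0 : S k ω ≤ 0 := ((hitZ_eq_iff S ω hk).mp hτ).1
        exact ⟨(-S k ω).toNat, hQω, by rw [Int.toNat_of_nonneg (by omega)]; ring, hτ⟩
      · rintro ⟨y, hQω, _, hτ⟩; exact ⟨hQω, hτ⟩
    rw [hU, measure_iUnion ?_ (fun y => hQ.inter (hA_meas k hk y))]
    intro y y' hyy
    refine Set.disjoint_left.mpr ?_
    rintro ω ⟨_, hy, _⟩ ⟨_, hy', _⟩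
    exact hyy (by omega)
  have hnlt_meas : MeasurableSet {ω | (n : ℕ∞) < hittingTimeZ S ω} := by
    have e : {ω | (n : ℕ∞) < hittingTimeZ S ω} = ⋂ j ∈ Finset.Icc 1 n, {ω | 0 < S j ω} := by
      ext ω
      simp only [Set.mem_setOf_eq, Set.mem_iInter, Finset.mem_Icc]
      rw [hitZ_lt_iff]
      constructor
      · intro h j hj; exact h j hj.1 hj.2
      · intro h j h1 h2; exact h j ⟨h1, h2⟩
    rw [e]
    exact MeasurableSet.biInter (Finset.Icc 1 n : Finset ℕ).countable_toSet
      (fun j _ => measSet_comp (hSm j) (fun z => 0 < z))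
  have hpart : ∀ Q : Set Ω, MeasurableSet Q →
      P Q = P (Q ∩ {ω | (n : ℕ∞) < hittingTimeZ S ω})
        + ∑ k ∈ Icc 1 n, P (Q ∩ {ω | hittingTimeZ S ω = (k : ℕ∞)}) := by
    intro Q hQ
    have hcover : Q = (Q ∩ {ω | (n : ℕ∞) < hittingTimeZ S ω})
        ∪ ⋃ k ∈ (Icc 1 n : Finset ℕ), Q ∩ {ω | hittingTimeZ S ω = (k : ℕ∞)} := by
      ext ω
      simp only [Set.mem_union, Set.mem_inter_iff, Set.mem_iUnion, Set.mem_setOf_eq,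
        Finset.mem_coe, Finset.mem_Icc]
      constructor
      · intro hq
        rcases lt_or_ge (n : ℕ∞) (hittingTimeZ S ω) with h | h
        · exact Or.inl ⟨hq, h⟩
        · obtain ⟨k, hkeq, hkn⟩ := ENat.le_coe_iff.mp h
          have h1 : 1 ≤ k := by
            have h2 := hitZ_one_le S ω
            rw [hkeq] at h2
            exact_mod_cast h2
          exact Or.inr ⟨k, ⟨h1, hkn⟩, hq, hkeq⟩
      · rintro (⟨hq, _⟩ | ⟨k, _, hq, _⟩) <;> exact hq
    have hdisj : Disjoint (Q ∩ {ω | (n : ℕ∞) < hittingTimeZ S ω})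
        (⋃ k ∈ (Icc 1 n : Finset ℕ), Q ∩ {ω | hittingTimeZ S ω = (k : ℕ∞)}) := by
      refine Set.disjoint_left.mpr ?_
      rintro ω ⟨_, hlt⟩ hmem
      simp only [Set.mem_iUnion, Set.mem_inter_iff, Set.mem_setOf_eq, Finset.mem_coe,
        Finset.mem_Icc] at hmem
      obtain ⟨k, ⟨h1, h2⟩, _, hτ⟩ := hmem
      have hlt' : (n : ℕ∞) < hittingTimeZ S ω := hlt
      rw [hτ] at hlt'
      exact absurd (Nat.cast_lt.mp hlt') (by omega)
    have hmeasU : MeasurableSet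
        (⋃ k ∈ (Icc 1 n : Finset ℕ), Q ∩ {ω | hittingTimeZ S ω = (k : ℕ∞)}) :=
      Finset.measurableSet_biUnion (f := fun k : ℕ => Q ∩ {ω | hittingTimeZ S ω = (k : ℕ∞)})
        (Icc 1 n) (fun k hk => hQ.inter (hτmeas k (Finset.mem_Icc.mp hk).1))
    have hpd : Set.PairwiseDisjoint ↑(Icc 1 n : Finset ℕ)
        (fun k : ℕ => Q ∩ {ω | hittingTimeZ S ω = (k : ℕ∞)}) := by
      intro a _ b _ hab
      refine Set.disjoint_left.mpr ?_
      rintro ω ⟨_, ha⟩ ⟨_, hb⟩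
      have ha' : hittingTimeZ S ω = (a : ℕ∞) := ha
      have hb' : hittingTimeZ S ω = (b : ℕ∞) := hb
      rw [ha'] at hb'
      exact hab (by exact_mod_cast hb')
    conv_lhs => rw [hcover]
    rw [measure_union hdisj hmeasU,
      measure_biUnion_finset hpd (fun k hk => hQ.inter (hτmeas k (Finset.mem_Icc.mp hk).1))]
  have hsplitsum : ∀ f : ℕ → ENNReal,
      ∑ k ∈ Icc 1 n, f k = (∑ k ∈ Icc 1 (n - 1), f k) + f n := by
    intro f
    have e : Icc 1 n = insert n (Icc 1 (n - 1)) := by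
      ext j; simp only [Finset.mem_Icc, Finset.mem_insert]; omega
    rw [e, Finset.sum_insert (by simp only [Finset.mem_Icc]; omega), add_comm]
  have hsymmS : ∀ (m : ℕ) (c c' : ℤ), c' = -c →
      P {ω | S m ω ≤ c} = P {ω | c' ≤ S m ω} := by
    intro m c c' hc
    subst hc
    have hid := neg_ident hindep hmeas hdist hsymm m
    have h := hid.measure_mem_eq (s := {z : ℤ | z ≤ c}) MeasurableSet.of_discrete
    have e1 : (fun ω => ∑ i ∈ range m, X i ω) ⁻¹' {z : ℤ | z ≤ c} = {ω | S m ω ≤ c} := by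
      ext ω; simp only [Set.mem_preimage, Set.mem_setOf_eq, hS]
    have e2 : (fun ω => -∑ i ∈ range m, X i ω) ⁻¹' {z : ℤ | z ≤ c} = {ω | -c ≤ S m ω} := by
      ext ω
      simp only [Set.mem_preimage, Set.mem_setOf_eq, hS]
      omega
    rw [e1, e2] at h
    exact h
  have hsplitS : ∀ k, k ≤ n → ∀ ω, S n ω = S k ω + ∑ i ∈ range (n - k), X (k + i) ω := by
    intro k hkn ω
    rw [hS n ω, hS k ω]
    conv_lhs => rw [show n = k + (n - k) by omega]
    exact Finset.sum_range_add (fun i => X i ω) k (n - k)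
  have hmar1 : ∀ k, 1 ≤ k → k ≤ n - 1 → ∀ y : ℕ,
      P ({ω | x ≤ S n ω} ∩ {ω | S k ω = -(y : ℤ) ∧ hittingTimeZ S ω = (k : ℕ∞)})
        = P {ω | S k ω = -(y : ℤ) ∧ hittingTimeZ S ω = (k : ℕ∞)}
          * P {ω | x + (y : ℤ) ≤ S (n - k) ω} := by
    intro k h1 h2 y
    have hset : {ω | x ≤ S n ω} ∩ {ω | S k ω = -(y : ℤ) ∧ hittingTimeZ S ω = (k : ℕ∞)}
        = {ω | S k ω = -(y : ℤ) ∧ hittingTimeZ S ω = (k : ℕ∞)}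
          ∩ {ω | (∑ i ∈ range (n - k), X (k + i) ω) ∈ {z : ℤ | x + (y : ℤ) ≤ z}} := by
      ext ω
      simp only [Set.mem_inter_iff, Set.mem_setOf_eq]
      have hs := hsplitS k (by omega) ω
      constructor
      · rintro ⟨hx1, hy, hτ⟩
        exact ⟨⟨hy, hτ⟩, by rw [hy] at hs; omega⟩
      · rintro ⟨⟨hy, hτ⟩, hsum⟩
        rw [hy] at hs
        exact ⟨by omega, hy, hτ⟩
    rw [hset, block_step hindep hmeas hdist S hS h1 (n - k) y {z : ℤ | x + (y : ℤ) ≤ z}]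
    rfl
  have hmar2 : ∀ k, 1 ≤ k → k ≤ n - 1 → ∀ y : ℕ,
      P ({ω | S n ω ≤ -x} ∩ {ω | S k ω = -(y : ℤ) ∧ hittingTimeZ S ω = (k : ℕ∞)})
        = P {ω | S k ω = -(y : ℤ) ∧ hittingTimeZ S ω = (k : ℕ∞)}
          * P {ω | S (n - k) ω ≤ (y : ℤ) - x} := by
    intro k h1 h2 y
    have hset : {ω | S n ω ≤ -x} ∩ {ω | S k ω = -(y : ℤ) ∧ hittingTimeZ S ω = (k : ℕ∞)}
        = {ω | S k ω = -(y : ℤ) ∧ hittingTimeZ S ω = (k : ℕ∞)}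
          ∩ {ω | (∑ i ∈ range (n - k), X (k + i) ω) ∈ {z : ℤ | z ≤ (y : ℤ) - x}} := by
      ext ω
      simp only [Set.mem_inter_iff, Set.mem_setOf_eq]
      have hs := hsplitS k (by omega) ω
      constructor
      · rintro ⟨hx1, hy, hτ⟩
        exact ⟨⟨hy, hτ⟩, by rw [hy] at hs; omega⟩
      · rintro ⟨⟨hy, hτ⟩, hsum⟩
        rw [hy] at hs
        exact ⟨by omega, hy, hτ⟩
    rw [hset, block_step hindep hmeas hdist S hS h1 (n - k) y {z : ℤ | z ≤ (y : ℤ) - x}]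
    rfl
  have hintv : ∀ k y : ℕ,
      P {ω | x - (y : ℤ) ≤ S (n - k) ω ∧ S (n - k) ω < x + (y : ℤ)}
          + P {ω | x + (y : ℤ) ≤ S (n - k) ω}
        = P {ω | x - (y : ℤ) ≤ S (n - k) ω} := by
    intro k y
    have hdisj : Disjoint {ω | x - (y : ℤ) ≤ S (n - k) ω ∧ S (n - k) ω < x + (y : ℤ)}
        {ω | x + (y : ℤ) ≤ S (n - k) ω} := by
      refine Set.disjoint_left.mpr ?_
      rintro ω ⟨_, h2⟩ h3
      simp only [Set.mem_setOf_eq] at h3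
      omega
    rw [← measure_union hdisj (measSet_comp (hSm (n - k)) (fun z => x + (y : ℤ) ≤ z))]
    congr 1
    ext ω
    simp only [Set.mem_union, Set.mem_setOf_eq]
    omega
  have hpsum : ∀ k, 1 ≤ k →
      (∑' y : ℕ, P {ω | S k ω = -(y : ℤ) ∧ hittingTimeZ S ω = (k : ℕ∞)})
        = P {ω | hittingTimeZ S ω = (k : ℕ∞)} := by
    intro k hk
    have h := hydecomp k hk Set.univ MeasurableSet.univ
    simpa only [Set.univ_inter] using h.symm
  have htsle : ∀ (q : ℕ → ENNReal), (∀ y, q y ≤ 1) → ∀ k, 1 ≤ k →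
      (∑' y : ℕ, P {ω | S k ω = -(y : ℤ) ∧ hittingTimeZ S ω = (k : ℕ∞)} * q y) ≤ 1 := by
    intro q hq k hk
    calc (∑' y : ℕ, P {ω | S k ω = -(y : ℤ) ∧ hittingTimeZ S ω = (k : ℕ∞)} * q y)
        ≤ ∑' y : ℕ, P {ω | S k ω = -(y : ℤ) ∧ hittingTimeZ S ω = (k : ℕ∞)} :=
          ENNReal.tsum_le_tsum (fun y => by
            calc P {ω | S k ω = -(y : ℤ) ∧ hittingTimeZ S ω = (k : ℕ∞)} * q y
                ≤ P {ω | S k ω = -(y : ℤ) ∧ hittingTimeZ S ω = (k : ℕ∞)} * 1 :=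
                  mul_le_mul_right (hq y) _
              _ = _ := mul_one _)
      _ = P {ω | hittingTimeZ S ω = (k : ℕ∞)} := hpsum k hk
      _ ≤ 1 := prob_le_one
  have hone : (∑ _k ∈ Icc 1 (n - 1), (1 : ENNReal)) ≠ ⊤ := by simp
  have hq2ne : (∑ k ∈ Icc 1 (n - 1), ∑' y : ℕ,
      P {ω | S k ω = -(y : ℤ) ∧ hittingTimeZ S ω = (k : ℕ∞)}
        * P {ω | x + (y : ℤ) ≤ S (n - k) ω}) ≠ ⊤ := by
    refine ne_top_of_le_ne_top hone (Finset.sum_le_sum (fun k hk => ?_))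
    exact htsle _ (fun y => prob_le_one) k (Finset.mem_Icc.mp hk).1
  have hqIne : (∑ k ∈ Icc 1 (n - 1), ∑' y : ℕ,
      P {ω | S k ω = -(y : ℤ) ∧ hittingTimeZ S ω = (k : ℕ∞)}
        * P {ω | x - (y : ℤ) ≤ S (n - k) ω ∧ S (n - k) ω < x + (y : ℤ)}) ≠ ⊤ := by
    refine ne_top_of_le_ne_top hone (Finset.sum_le_sum (fun k hk => ?_))
    exact htsle _ (fun y => prob_le_one) k (Finset.mem_Icc.mp hk).1
  have EqA : P {ω | x ≤ S n ω}
      = P {ω | x ≤ S n ω ∧ (n : ℕ∞) < hittingTimeZ S ω}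
        + ∑ k ∈ Icc 1 (n - 1), ∑' y : ℕ,
            P {ω | S k ω = -(y : ℤ) ∧ hittingTimeZ S ω = (k : ℕ∞)}
              * P {ω | x + (y : ℤ) ≤ S (n - k) ω} := by
    have hQ : MeasurableSet {ω | x ≤ S n ω} := measSet_comp (hSm n) (fun z => x ≤ z)
    rw [hpart _ hQ, hsplitsum]
    have he : {ω | x ≤ S n ω} ∩ {ω | hittingTimeZ S ω = (n : ℕ∞)} = ∅ := by
      ext ω
      simp only [Set.mem_inter_iff, Set.mem_setOf_eq, Set.mem_empty_iff_false, iff_false,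
        not_and]
      intro hx1 hτ
      have h0 := ((hitZ_eq_iff S ω (by omega)).mp hτ).1
      omega
    rw [he, measure_empty, add_zero]
    congr 1
    refine Finset.sum_congr rfl (fun k hk => ?_)
    obtain ⟨h1, h2⟩ := Finset.mem_Icc.mp hk
    rw [hydecomp k h1 _ hQ]
    exact tsum_congr (fun y => hmar1 k h1 h2 y)
  have EqB : P {ω | S n ω ≤ -x}
      = (∑ k ∈ Icc 1 (n - 1), ∑' y : ℕ,
            P {ω | S k ω = -(y : ℤ) ∧ hittingTimeZ S ω = (k : ℕ∞)}
              * P {ω | S (n - k) ω ≤ (y : ℤ) - x})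
        + P {ω | S n ω ≤ -x ∧ hittingTimeZ S ω = (n : ℕ∞)} := by
    have hQ : MeasurableSet {ω | S n ω ≤ -x} := measSet_comp (hSm n) (fun z => z ≤ -x)
    rw [hpart _ hQ, hsplitsum]
    have he : {ω | S n ω ≤ -x} ∩ {ω | (n : ℕ∞) < hittingTimeZ S ω} = ∅ := by
      ext ω
      simp only [Set.mem_inter_iff, Set.mem_setOf_eq, Set.mem_empty_iff_false, iff_false,
        not_and]
      intro h1
      rw [hitZ_lt_iff]
      push_neg
      exact ⟨n, by omega, le_rfl, by omega⟩
    rw [he, measure_empty, zero_add]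
    congr 1
    refine Finset.sum_congr rfl (fun k hk => ?_)
    obtain ⟨h1, h2⟩ := Finset.mem_Icc.mp hk
    rw [hydecomp k h1 _ hQ]
    exact tsum_congr (fun y => hmar2 k h1 h2 y)
  have EqC : P {ω | x ≤ S n ω} = P {ω | S n ω ≤ -x} :=
    (hsymmS n (-x) x (by ring)).symm
  have key : P {ω | x ≤ S n ω ∧ (n : ℕ∞) < hittingTimeZ S ω}
        + (∑ k ∈ Icc 1 (n - 1), ∑' y : ℕ,
            P {ω | S k ω = -(y : ℤ) ∧ hittingTimeZ S ω = (k : ℕ∞)}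
              * P {ω | x + (y : ℤ) ≤ S (n - k) ω})
      = ((∑ k ∈ Icc 1 (n - 1), ∑' y : ℕ,
            P {ω | S k ω = -(y : ℤ) ∧ hittingTimeZ S ω = (k : ℕ∞)}
              * P {ω | x - (y : ℤ) ≤ S (n - k) ω ∧ S (n - k) ω < x + (y : ℤ)})
          + P {ω | S n ω ≤ -x ∧ hittingTimeZ S ω = (n : ℕ∞)})
        + (∑ k ∈ Icc 1 (n - 1), ∑' y : ℕ,
            P {ω | S k ω = -(y : ℤ) ∧ hittingTimeZ S ω = (k : ℕ∞)}
              * P {ω | x + (y : ℤ) ≤ S (n - k) ω}) := by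
    calc P {ω | x ≤ S n ω ∧ (n : ℕ∞) < hittingTimeZ S ω}
          + (∑ k ∈ Icc 1 (n - 1), ∑' y : ℕ,
              P {ω | S k ω = -(y : ℤ) ∧ hittingTimeZ S ω = (k : ℕ∞)}
                * P {ω | x + (y : ℤ) ≤ S (n - k) ω})
        = P {ω | x ≤ S n ω} := EqA.symm
      _ = P {ω | S n ω ≤ -x} := EqC
      _ = (∑ k ∈ Icc 1 (n - 1), ∑' y : ℕ,
            P {ω | S k ω = -(y : ℤ) ∧ hittingTimeZ S ω = (k : ℕ∞)}
              * P {ω | S (n - k) ω ≤ (y : ℤ) - x})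
          + P {ω | S n ω ≤ -x ∧ hittingTimeZ S ω = (n : ℕ∞)} := EqB
      _ = (∑ k ∈ Icc 1 (n - 1), ∑' y : ℕ,
            P {ω | S k ω = -(y : ℤ) ∧ hittingTimeZ S ω = (k : ℕ∞)}
              * P {ω | x - (y : ℤ) ≤ S (n - k) ω})
          + P {ω | S n ω ≤ -x ∧ hittingTimeZ S ω = (n : ℕ∞)} := by
            congr 1
            refine Finset.sum_congr rfl (fun k hk => tsum_congr (fun y => ?_))
            rw [hsymmS (n - k) ((y : ℤ) - x) (x - (y : ℤ)) (by ring)]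
      _ = ((∑ k ∈ Icc 1 (n - 1), ∑' y : ℕ,
            P {ω | S k ω = -(y : ℤ) ∧ hittingTimeZ S ω = (k : ℕ∞)}
              * P {ω | x - (y : ℤ) ≤ S (n - k) ω ∧ S (n - k) ω < x + (y : ℤ)})
          + (∑ k ∈ Icc 1 (n - 1), ∑' y : ℕ,
            P {ω | S k ω = -(y : ℤ) ∧ hittingTimeZ S ω = (k : ℕ∞)}
              * P {ω | x + (y : ℤ) ≤ S (n - k) ω}))
          + P {ω | S n ω ≤ -x ∧ hittingTimeZ S ω = (n : ℕ∞)} := by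
            congr 1
            rw [← Finset.sum_add_distrib]
            refine Finset.sum_congr rfl (fun k hk => ?_)
            rw [← ENNReal.tsum_add]
            refine tsum_congr (fun y => ?_)
            rw [← mul_add, hintv k y]
      _ = _ := by ring
  have main : P {ω | x ≤ S n ω ∧ (n : ℕ∞) < hittingTimeZ S ω}
      = (∑ k ∈ Icc 1 (n - 1), ∑' y : ℕ,
          P {ω | S k ω = -(y : ℤ) ∧ hittingTimeZ S ω = (k : ℕ∞)}
            * P {ω | x - (y : ℤ) ≤ S (n - k) ω ∧ S (n - k) ω < x + (y : ℤ)})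
        + P {ω | S n ω ≤ -x ∧ hittingTimeZ S ω = (n : ℕ∞)} :=
    WithTop.add_right_cancel hq2ne key
  rw [main, ENNReal.toReal_add hqIne (measure_ne_top P _)]
  congr 1
  rw [ENNReal.toReal_sum (fun k hk => ne_top_of_le_ne_top ENNReal.one_ne_top
    (htsle _ (fun y => prob_le_one) k (Finset.mem_Icc.mp hk).1))]
  refine Finset.sum_congr rfl (fun k hk => ?_)
  rw [ENNReal.tsum_toReal_eq
    (fun y => ENNReal.mul_ne_top (measure_ne_top P _) (measure_ne_top P _))]
  exact tsum_congr (fun y => ENNReal.toReal_mul)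
end

section
/- Let $g_A(x) = \frac{3}{\pi A}\left(\frac{1 - \cos(Ax)}{Ax^2}\right)^2$ for $A > 0$. Then $g_A$ is a probability density on $\mathbb{R}$, and a random variable $U$ with density $g_A$ satisfies $\mathbb{E}|U| = \frac{6 \ln 2}{\pi A}$. -/
open Set MeasureTheory Real Filter Topology


lemma integrableOn_exp_mul_cos (t a : ℝ) (ht : 0 < t) :
    IntegrableOn (fun x : ℝ => Real.exp (-(t * x)) * Real.cos (a * x)) (Ioi 0) := by
  have h := exp_neg_integrableOn_Ioi 0 ht
  refine h.mono' ?_ ?_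
  · exact (((Real.continuous_exp.comp (continuous_const.mul continuous_id).neg).mul
      (Real.continuous_cos.comp (continuous_const.mul continuous_id)))).aestronglyMeasurable
  · filter_upwards with x
    rw [norm_mul, Real.norm_eq_abs, Real.norm_eq_abs, Real.abs_exp, neg_mul]
    nlinarith [abs_cos_le_one (a*x), Real.exp_pos (-(t*x)), abs_nonneg (Real.cos (a*x))]

lemma laplace_cos (t a : ℝ) (ht : 0 < t) :
    ∫ x in Ioi (0:ℝ), Real.exp (-(t * x)) * Real.cos (a * x) = t / (t ^ 2 + a ^ 2) := by
  have hd : (0:ℝ) < t ^ 2 + a ^ 2 := by positivity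
  set F : ℝ → ℝ := fun x =>
    Real.exp (-(t * x)) * (a * Real.sin (a * x) - t * Real.cos (a * x)) / (t ^ 2 + a ^ 2) with hF
  have hderiv : ∀ x ∈ Ici (0:ℝ), HasDerivAt F (Real.exp (-(t * x)) * Real.cos (a * x)) x := by
    intro x _
    have h0 : HasDerivAt (fun x : ℝ => -(t * x)) (-t) x := by
      simpa [neg_mul] using (hasDerivAt_id x).const_mul (-t)
    have h1 : HasDerivAt (fun x : ℝ => Real.exp (-(t * x))) (Real.exp (-(t*x)) * (-t)) x :=
      h0.exp
    have hs : HasDerivAt (fun x : ℝ => Real.sin (a * x)) (Real.cos (a*x) * a) x := by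
      simpa using ((hasDerivAt_id x).const_mul a).sin
    have hc : HasDerivAt (fun x : ℝ => Real.cos (a * x)) (-Real.sin (a*x) * a) x := by
      simpa using ((hasDerivAt_id x).const_mul a).cos
    have h2 : HasDerivAt (fun x : ℝ => a * Real.sin (a * x) - t * Real.cos (a * x))
        (a * (Real.cos (a*x) * a) - t * (-Real.sin (a*x) * a)) x :=
      (hs.const_mul a).sub (hc.const_mul t)
    have := (h1.mul h2).div_const (t ^ 2 + a ^ 2)
    refine this.congr_deriv ?_
    field_simp
    ring
  have htend : Tendsto F atTop (𝓝 0) := by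
    have hexp : Tendsto (fun x : ℝ => Real.exp (-(t * x))) atTop (𝓝 0) := by
      apply Real.tendsto_exp_atBot.comp
      exact (tendsto_neg_atBot_iff.mpr (tendsto_id.const_mul_atTop ht))
    have hb : ∀ x : ℝ, ‖F x‖ ≤ Real.exp (-(t * x)) * ((|a| + |t|) / (t ^ 2 + a ^ 2)) := by
      intro x
      have habs : |a * Real.sin (a*x) - t * Real.cos (a*x)| ≤ |a| + |t| := by
        calc |a * Real.sin (a*x) - t * Real.cos (a*x)|
            ≤ |a * Real.sin (a*x)| + |t * Real.cos (a*x)| := abs_sub _ _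
          _ ≤ |a| + |t| := by
              rw [abs_mul, abs_mul]
              have := abs_sin_le_one (a*x); have := abs_cos_le_one (a*x)
              nlinarith [abs_nonneg a, abs_nonneg t]
      rw [hF]
      rw [norm_div, norm_mul, Real.norm_eq_abs, Real.norm_eq_abs, Real.norm_eq_abs,
        Real.abs_exp, abs_of_pos hd]
      calc Real.exp (-(t * x)) * |a * Real.sin (a*x) - t * Real.cos (a*x)| / (t ^ 2 + a ^ 2)
          ≤ Real.exp (-(t * x)) * (|a| + |t|) / (t ^ 2 + a ^ 2) := by gcongr
        _ = Real.exp (-(t * x)) * ((|a| + |t|) / (t ^ 2 + a ^ 2)) := by ring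
    have : Tendsto (fun x : ℝ => Real.exp (-(t * x)) * ((|a| + |t|) / (t ^ 2 + a ^ 2))) atTop (𝓝 0) := by
      simpa using hexp.mul_const ((|a| + |t|) / (t ^ 2 + a ^ 2))
    exact squeeze_zero_norm hb this
  have key := integral_Ioi_of_hasDerivAt_of_tendsto' hderiv (integrableOn_exp_mul_cos t a ht) htend
  rw [key, hF]
  simp
  field_simp


lemma gamma_pow {x : ℝ} (hx : 0 < x) (n : ℕ) :
    ∫ t in Ioi (0:ℝ), t ^ n * Real.exp (-(x * t)) = n.factorial / x ^ (n+1) := by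
  have h := integral_rpow_mul_exp_neg_mul_Ioi (a := (n+1 : ℝ)) (r := x) (by positivity) hx
  have hcongr : ∫ t in Ioi (0:ℝ), t ^ ((n+1:ℝ) - 1) * Real.exp (-(x * t))
      = ∫ t in Ioi (0:ℝ), t ^ n * Real.exp (-(x * t)) := by
    refine setIntegral_congr_fun measurableSet_Ioi (fun t ht => ?_)
    rw [show ((n+1:ℝ) - 1) = (n:ℝ) by ring, Real.rpow_natCast]
  rw [hcongr] at h
  rw [h, Real.Gamma_nat_eq_factorial]  -- Gamma (n+1) needs shape (↑n + 1)
  rw [show ((n:ℝ)+1) = ((n+1 : ℕ) : ℝ) by push_cast; ring, Real.rpow_natCast]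
  field_simp
  rw [← mul_pow, one_div, inv_mul_cancel₀ hx.ne', one_pow]

lemma integral_even {f : ℝ → ℝ} (hf : Integrable f) (he : ∀ x, f (-x) = f x) :
    ∫ x, f x = 2 * ∫ x in Ioi (0:ℝ), f x := by
  rw [← intervalIntegral.integral_Iic_add_Ioi (b := (0:ℝ)) hf.integrableOn hf.integrableOn]
  have h2 : ∫ x in Iic (0:ℝ), f x = ∫ x in Ioi (0:ℝ), f x := by
    have := integral_comp_neg_Iic (0:ℝ) f
    simp_rw [he] at this
    simpa using this
  rw [h2]; ring

lemma integrableOn_Iio_of_neg {f : ℝ → ℝ} (h : IntegrableOn (fun x => f (-x)) (Ioi (0:ℝ))) :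
    IntegrableOn f (Iio (0:ℝ)) := by
  have A : MeasurableEmbedding fun x : ℝ => -x :=
    (Homeomorph.neg ℝ).isClosedEmbedding.measurableEmbedding
  have hmap : (volume : Measure ℝ).map (fun x => -x) = volume := Measure.map_neg_eq_self _
  have key := A.integrableOn_map_iff (f := f) (s := Iio 0) (μ := (volume : Measure ℝ))
  rw [hmap] at key
  rw [key]
  have : (fun x : ℝ => -x) ⁻¹' (Iio 0) = Ioi 0 := by ext y; simp
  rw [this]
  exact h

lemma integrableOn_h {n : ℕ} (h2 : 2 ≤ n) (h4 : n ≤ 4) :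
    IntegrableOn (fun x : ℝ => (1 - Real.cos x)^2 / x ^ n) (Ioi 0) := by
  have hmeas : Measurable (fun x : ℝ => (1 - Real.cos x)^2 / x ^ n) :=
    (((measurable_const.sub Real.continuous_cos.measurable).pow_const 2).div
      (measurable_id.pow_const n))
  rw [← Ioc_union_Ioi_eq_Ioi (le_of_lt one_pos)]
  refine IntegrableOn.union ?_ ?_
  · refine Measure.integrableOn_of_bounded (M := 1/4) (by simp) hmeas.aestronglyMeasurable ?_
    refine (ae_restrict_iff' measurableSet_Ioc).mpr (ae_of_all _ fun x hx => ?_)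
    obtain ⟨hx0, hx1⟩ := hx
    have hc1 : 0 ≤ 1 - Real.cos x := by nlinarith [Real.cos_le_one x]
    have hc2 : 1 - Real.cos x ≤ x^2/2 := by nlinarith [Real.one_sub_sq_div_two_le_cos (x := x)]
    have hxn : x^4 ≤ x^n := pow_le_pow_of_le_one hx0.le hx1 h4
    have hxnpos : 0 < x^n := pow_pos hx0 n
    rw [Real.norm_eq_abs, abs_of_nonneg (by positivity), div_le_div_iff₀ hxnpos (by norm_num)]
    nlinarith
  · have hint : IntegrableOn (fun x : ℝ => 4 * x ^ (-2:ℝ)) (Ioi 1) :=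
      (integrableOn_Ioi_rpow_of_lt (by norm_num) one_pos).const_mul 4
    refine hint.mono' hmeas.aestronglyMeasurable ?_
    refine (ae_restrict_iff' measurableSet_Ioi).mpr (ae_of_all _ fun x hx => ?_)
    rw [mem_Ioi] at hx
    have hx0 : (0:ℝ) < x := lt_trans one_pos hx
    have hc1 : 0 ≤ 1 - Real.cos x := by nlinarith [Real.cos_le_one x]
    have hc2 : 1 - Real.cos x ≤ 2 := by nlinarith [Real.neg_one_le_cos x]
    have hxn : x^2 ≤ x^n := pow_le_pow_right₀ hx.le h2
    have hrp : x ^ (-2:ℝ) = 1 / x^2 := by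
      rw [Real.rpow_neg hx0.le, show ((2:ℝ) = ((2:ℕ):ℝ)) by norm_num, Real.rpow_natCast]
      ring
    rw [Real.norm_eq_abs, abs_of_nonneg (by positivity), hrp]
    rw [div_le_iff₀ (by positivity)]
    have h1 : (1 - Real.cos x)^2 ≤ 4 := by nlinarith
    have : 0 < x^2 := by positivity
    have h5 : 4 ≤ 4 * (1/x^2) * x^n := by
      rw [mul_one_div, div_mul_eq_mul_div, le_div_iff₀ this]
      nlinarith
    linarith



lemma integral_rat_arctan :
    ∫ t in Ioi (0:ℝ), (-2/(t^2+1) + 8/(t^2+4)) = π := by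
  have hmeas : Measurable fun t : ℝ => -2/(t^2+1) + 8/(t^2+4) := by fun_prop
  have hderiv : ∀ t ∈ Ici (0:ℝ),
      HasDerivAt (fun t : ℝ => -2 * Real.arctan t + 4 * Real.arctan (t/2))
      (-2/(t^2+1) + 8/(t^2+4)) t := by
    intro t _
    have h1 : HasDerivAt Real.arctan (1/(1+t^2)) t := Real.hasDerivAt_arctan t
    have h2 : HasDerivAt (fun t : ℝ => Real.arctan (t/2)) ((1/(1+(t/2)^2)) * (1/2)) t := by
      exact (Real.hasDerivAt_arctan (t/2)).comp t ((hasDerivAt_id t).div_const 2)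
    have h3 := (h1.const_mul (-2)).add (h2.const_mul 4)
    refine h3.congr_deriv ?_
    have : (1:ℝ) + (t/2)^2 > 0 := by positivity
    field_simp
    ring
  have hint : IntegrableOn (fun t : ℝ => -2/(t^2+1) + 8/(t^2+4)) (Ioi 0) := by
    refine ((integrable_inv_one_add_sq.const_mul 10).integrableOn).mono'
      hmeas.aestronglyMeasurable (ae_of_all _ fun t => ?_)
    have h1 : |(-2:ℝ)/(t^2+1)| ≤ 2/(1+t^2) := by
      rw [abs_div, abs_neg]
      simp only [abs_of_nonneg, abs_of_pos (show (0:ℝ) < t^2+1 by positivity)]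
      rw [abs_of_nonneg (by norm_num : (0:ℝ) ≤ 2)]
      apply div_le_div_of_nonneg_left (by norm_num) (by positivity) (by nlinarith)
    have h2 : |(8:ℝ)/(t^2+4)| ≤ 8/(1+t^2) := by
      rw [abs_div, abs_of_nonneg (by norm_num : (0:ℝ) ≤ 8),
        abs_of_pos (show (0:ℝ) < t^2+4 by positivity)]
      apply div_le_div_of_nonneg_left (by norm_num) (by positivity) (by nlinarith)
    calc ‖-2/(t^2+1) + 8/(t^2+4)‖ ≤ |(-2:ℝ)/(t^2+1)| + |(8:ℝ)/(t^2+4)| := abs_add_le _ _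
      _ ≤ 2/(1+t^2) + 8/(1+t^2) := add_le_add h1 h2
      _ = 10 * (1+t^2)⁻¹ := by ring
  have htend : Tendsto (fun t : ℝ => -2 * Real.arctan t + 4 * Real.arctan (t/2)) atTop
      (𝓝 π) := by
    have ha : Tendsto Real.arctan atTop (𝓝 (π/2)) :=
      tendsto_nhds_of_tendsto_nhdsWithin tendsto_arctan_atTop
    have hb : Tendsto (fun t : ℝ => Real.arctan (t/2)) atTop (𝓝 (π/2)) :=
      ha.comp (tendsto_id.atTop_div_const (by norm_num))
    have := (ha.const_mul (-2)).add (hb.const_mul 4)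
    convert this using 2
    ring
  have key := integral_Ioi_of_hasDerivAt_of_tendsto' hderiv hint htend
  rw [key]
  simp [Real.arctan_zero]

lemma integral_rat_log :
    ∫ t in Ioi (0:ℝ), (2*t/(t^2+1) - 2*t/(t^2+4)) = 2 * Real.log 2 := by
  have hmeas : Measurable fun t : ℝ => 2*t/(t^2+1) - 2*t/(t^2+4) := by fun_prop
  have hderiv : ∀ t ∈ Ici (0:ℝ),
      HasDerivAt (fun t : ℝ => Real.log (t^2+1) - Real.log (t^2+4))
      (2*t/(t^2+1) - 2*t/(t^2+4)) t := by
    intro t _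
    have hp1 : HasDerivAt (fun t : ℝ => t^2+1) (2*t) t := by
      simpa using (hasDerivAt_pow 2 t).add_const 1
    have hp4 : HasDerivAt (fun t : ℝ => t^2+4) (2*t) t := by
      simpa using (hasDerivAt_pow 2 t).add_const 4
    have h1 : HasDerivAt (fun t : ℝ => Real.log (t^2+1)) ((t^2+1)⁻¹ * (2*t)) t :=
      (Real.hasDerivAt_log (by positivity)).comp t hp1
    have h4 : HasDerivAt (fun t : ℝ => Real.log (t^2+4)) ((t^2+4)⁻¹ * (2*t)) t :=
      (Real.hasDerivAt_log (by positivity)).comp t hp4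
    have h5 := h1.sub h4
    refine h5.congr_deriv ?_
    field_simp
  have hint : IntegrableOn (fun t : ℝ => 2*t/(t^2+1) - 2*t/(t^2+4)) (Ioi 0) := by
    refine ((integrable_inv_one_add_sq.const_mul 6).integrableOn).mono'
      hmeas.aestronglyMeasurable ?_
    refine (ae_restrict_iff' measurableSet_Ioi).mpr (ae_of_all _ fun t ht => ?_)
    rw [mem_Ioi] at ht
    have he : 2*t/(t^2+1) - 2*t/(t^2+4) = 6*t/((t^2+1)*(t^2+4)) := by
      field_simp
      ring
    rw [Real.norm_eq_abs, he, abs_of_nonneg (by positivity)]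
    rw [div_le_iff₀ (by positivity)]
    have k1 : (0:ℝ) ≤ t^2 - t + 4 := by nlinarith [sq_nonneg (t-1/2)]
    have k2 : (0:ℝ) < 1 + t^2 := by positivity
    have k3 : (6:ℝ) * (1+t^2)⁻¹ * ((t^2+1)*(t^2+4)) = 6*(t^2+4) := by
      field_simp
      ring
    rw [k3]
    nlinarith
  have htend : Tendsto (fun t : ℝ => Real.log (t^2+1) - Real.log (t^2+4)) atTop (𝓝 0) := by
    have hratio : Tendsto (fun t : ℝ => (t^2+1)/(t^2+4)) atTop (𝓝 1) := by
      have h4 : Tendsto (fun t : ℝ => t^2+4) atTop atTop :=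
        tendsto_atTop_add_const_right atTop 4 (tendsto_pow_atTop (by norm_num))
      have hz : Tendsto (fun t : ℝ => 3/(t^2+4)) atTop (𝓝 0) := by
        simpa [div_eq_mul_inv] using h4.inv_tendsto_atTop.const_mul 3
      have := (tendsto_const_nhds (x := (1:ℝ)) (f := atTop)).sub hz
      rw [sub_zero] at this
      refine this.congr fun t => ?_
      have h0 : (0:ℝ) < t^2+4 := by positivity
      field_simp
      ring
    have hlog : Tendsto Real.log (𝓝 1) (𝓝 0) := by
      simpa using (Real.continuousAt_log one_ne_zero).tendsto
    have := hlog.comp hratio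
    refine this.congr fun t => ?_
    have h1 : (0:ℝ) < t^2+1 := by positivity
    have h4 : (0:ℝ) < t^2+4 := by positivity
    simp [Function.comp, Real.log_div h1.ne' h4.ne']
  have key := integral_Ioi_of_hasDerivAt_of_tendsto' hderiv hint htend
  rw [key]
  have : Real.log (0^2+4) = 2 * Real.log 2 := by
    norm_num
    rw [show (4:ℝ) = 2^2 by norm_num, Real.log_pow]
    ring
  simp only [this]
  norm_num

lemma laplace_sq (t : ℝ) (ht : 0 < t) :
    ∫ x in Ioi (0:ℝ), (1 - Real.cos x)^2 * Real.exp (-(t * x))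
      = 3/(2*t) - 2*t/(t^2+1) + t/(2*(t^2+4)) := by
  have i0 := integrableOn_exp_mul_cos t 0 ht
  have i1 := integrableOn_exp_mul_cos t 1 ht
  have i2 := integrableOn_exp_mul_cos t 2 ht
  have hptw : ∀ x : ℝ, (1 - Real.cos x)^2 * Real.exp (-(t * x))
      = (3/2) * (Real.exp (-(t*x)) * Real.cos (0*x))
        - 2 * (Real.exp (-(t*x)) * Real.cos (1*x))
        + (1/2) * (Real.exp (-(t*x)) * Real.cos (2*x)) := by
    intro x
    have hc := Real.cos_sq x
    rw [zero_mul, Real.cos_zero, one_mul]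
    nlinarith [hc, Real.exp_pos (-(t*x))]
  rw [setIntegral_congr_fun measurableSet_Ioi (fun x _ => hptw x)]
  have ia : IntegrableOn (fun x : ℝ => (3/2) * (Real.exp (-(t*x)) * Real.cos (0*x))
      - 2 * (Real.exp (-(t*x)) * Real.cos (1*x))) (Ioi 0) :=
    (i0.const_mul _).sub (i1.const_mul _)
  rw [show (fun x : ℝ => (3/2) * (Real.exp (-(t*x)) * Real.cos (0*x))
        - 2 * (Real.exp (-(t*x)) * Real.cos (1*x))
        + (1/2) * (Real.exp (-(t*x)) * Real.cos (2*x)))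
      = (fun x : ℝ => ((3/2) * (Real.exp (-(t*x)) * Real.cos (0*x))
        - 2 * (Real.exp (-(t*x)) * Real.cos (1*x)))
        + (fun x : ℝ => (1/2) * (Real.exp (-(t*x)) * Real.cos (2*x))) x) from rfl] at *
  rw [integral_add ia (i2.const_mul _),
    integral_sub (i0.const_mul _) (i1.const_mul _),
    integral_const_mul, integral_const_mul, integral_const_mul,
    laplace_cos t 0 ht, laplace_cos t 1 ht, laplace_cos t 2 ht]
  have h1 : t^2 + (0:ℝ)^2 = t^2 := by ring
  rw [h1]
  field_simp
  ring



set_option maxHeartbeats 1000000 in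
lemma tonelli_swap_key (k : ℕ) (hk : 2 ≤ k) (hk3 : k ≤ 3) :
    (k.factorial : ℝ) * ∫ x in Ioi (0:ℝ), (1 - Real.cos x)^2 / x ^ (k+1)
      = ∫ t in Ioi (0:ℝ), t ^ k * (3/(2*t) - 2*t/(t^2+1) + t/(2*(t^2+4))) := by
  have hμ : True := trivial
  set μ : Measure ℝ := volume.restrict (Ioi 0)
  set f : ℝ × ℝ → ℝ := fun p => (1 - Real.cos p.1)^2 * (p.2 ^ k * Real.exp (-(p.1 * p.2)))
    with hf
  have hcont : Continuous f := by
    apply Continuous.mul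
    · exact ((continuous_const.sub (Real.continuous_cos.comp continuous_fst)).pow 2)
    · exact ((continuous_snd.pow k).mul
        (Real.continuous_exp.comp (continuous_fst.mul continuous_snd).neg))
  have hgam_int : ∀ x : ℝ, 0 < x →
      IntegrableOn (fun t : ℝ => t ^ k * Real.exp (-(x * t))) (Ioi 0) := by
    intro x hx
    have h := integrableOn_rpow_mul_exp_neg_mul_rpow (p := 1) (s := (k:ℝ)) (b := x)
      (lt_of_lt_of_le (by norm_num) (Nat.cast_nonneg k)) one_pos hx
    refine h.congr_fun ?_ measurableSet_Ioi
    intro t ht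
    simp only [Real.rpow_natCast, Real.rpow_one, neg_mul]
  have hinner : ∀ x : ℝ, 0 < x → (∫ t, f (x, t) ∂μ)
      = (k.factorial : ℝ) * ((1 - Real.cos x)^2 / x ^ (k+1)) := by
    intro x hx
    calc ∫ t, f (x, t) ∂μ
        = (1 - Real.cos x)^2 * ∫ t, t ^ k * Real.exp (-(x * t)) ∂μ := by
          simp only [hf]
          rw [← integral_const_mul]
      _ = (1 - Real.cos x)^2 * ((k.factorial : ℝ) / x ^ (k+1)) := by
          rw [show μ = volume.restrict (Ioi 0) from rfl, gamma_pow hx k]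
      _ = (k.factorial : ℝ) * ((1 - Real.cos x)^2 / x ^ (k+1)) := by ring
  have hInt : Integrable f (μ.prod μ) := by
    refine (integrable_prod_iff hcont.aestronglyMeasurable).mpr ⟨?_, ?_⟩
    · refine (ae_restrict_iff' measurableSet_Ioi).mpr (ae_of_all _ fun x hx => ?_)
      show Integrable (fun t : ℝ => (1 - Real.cos x)^2 * (t ^ k * Real.exp (-(x * t)))) μ
      exact ((hgam_int x hx).const_mul _)
    · have hx_eq : ∀ᵐ x ∂μ, (∫ t, ‖f (x, t)‖ ∂μ)
          = (k.factorial : ℝ) * ((1 - Real.cos x)^2 / x ^ (k+1)) := by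
        refine (ae_restrict_iff' measurableSet_Ioi).mpr (ae_of_all _ fun x hx => ?_)
        rw [mem_Ioi] at hx
        have hnorm : ∀ᵐ t ∂μ, ‖f (x, t)‖ = f (x, t) := by
          refine (ae_restrict_iff' measurableSet_Ioi).mpr (ae_of_all _ fun t ht => ?_)
          rw [mem_Ioi] at ht
          simp only [hf, Real.norm_eq_abs]
          exact abs_of_nonneg (by positivity)
        rw [integral_congr_ae hnorm, hinner x hx]
      refine (integrable_congr hx_eq).mpr ?_
      exact ((integrableOn_h (by omega) (by omega)).const_mul _)
  have hswap := integral_integral_swap (f := fun x t => f (x, t)) hInt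
  have hL : ∫ x, ∫ t, f (x, t) ∂μ ∂μ
      = (k.factorial : ℝ) * ∫ x in Ioi (0:ℝ), (1 - Real.cos x)^2 / x ^ (k+1) := by
    rw [← integral_const_mul]
    refine setIntegral_congr_fun measurableSet_Ioi (fun x hx => ?_)
    exact hinner x hx
  have hR : ∫ t, ∫ x, f (x, t) ∂μ ∂μ
      = ∫ t in Ioi (0:ℝ), t ^ k * (3/(2*t) - 2*t/(t^2+1) + t/(2*(t^2+4))) := by
    refine setIntegral_congr_fun measurableSet_Ioi (fun t ht => ?_)
    rw [mem_Ioi] at ht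
    calc ∫ x, f (x, t) ∂μ
        = t ^ k * ∫ x, (1 - Real.cos x)^2 * Real.exp (-(t * x)) ∂μ := by
          simp only [hf]
          rw [← integral_const_mul]
          congr 1
          funext x
          rw [mul_comm x t]
          ring
      _ = t ^ k * (3/(2*t) - 2*t/(t^2+1) + t/(2*(t^2+4))) := by
          rw [show μ = volume.restrict (Ioi 0) from rfl, laplace_sq t ht]
  rw [← hL, ← hR, hswap]

lemma IoiH4 : ∫ x in Ioi (0:ℝ), (1 - Real.cos x)^2 / x ^ 4 = π / 6 := by
  have h := tonelli_swap_key 3 (by norm_num) le_rfl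
  have hcongr : ∫ t in Ioi (0:ℝ), (t:ℝ) ^ 3 * (3/(2*t) - 2*t/(t^2+1) + t/(2*(t^2+4)))
      = ∫ t in Ioi (0:ℝ), (-2/(t^2+1) + 8/(t^2+4)) := by
    refine setIntegral_congr_fun measurableSet_Ioi (fun t ht => ?_)
    rw [mem_Ioi] at ht
    have h1 : (0:ℝ) < t^2+1 := by positivity
    have h4 : (0:ℝ) < t^2+4 := by positivity
    field_simp
    ring
  rw [hcongr, integral_rat_arctan] at h
  norm_num [Nat.factorial] at h
  linarith

lemma IoiH3 : ∫ x in Ioi (0:ℝ), (1 - Real.cos x)^2 / x ^ 3 = Real.log 2 := by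
  have h := tonelli_swap_key 2 le_rfl (by norm_num)
  have hcongr : ∫ t in Ioi (0:ℝ), (t:ℝ) ^ 2 * (3/(2*t) - 2*t/(t^2+1) + t/(2*(t^2+4)))
      = ∫ t in Ioi (0:ℝ), (2*t/(t^2+1) - 2*t/(t^2+4)) := by
    refine setIntegral_congr_fun measurableSet_Ioi (fun t ht => ?_)
    rw [mem_Ioi] at ht
    have h1 : (0:ℝ) < t^2+1 := by positivity
    have h4 : (0:ℝ) < t^2+4 := by positivity
    field_simp
    ring
  rw [hcongr, integral_rat_log] at h
  norm_num [Nat.factorial] at h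
  linarith



section FinalPieces

noncomputable def F1 : ℝ → ℝ := fun x => (1 - Real.cos x)^2 / x ^ 4
noncomputable def F2 : ℝ → ℝ := fun x => |x| * ((1 - Real.cos x)^2 / x ^ 4)

lemma F1_even (x : ℝ) : F1 (-x) = F1 x := by
  unfold F1
  rw [Real.cos_neg]
  ring

lemma F2_even (x : ℝ) : F2 (-x) = F2 x := by
  unfold F2
  rw [Real.cos_neg, abs_neg]
  ring

lemma integrable_of_even {f : ℝ → ℝ} (he : ∀ x, f (-x) = f x)
    (h : IntegrableOn f (Ioi (0:ℝ))) : Integrable f := by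
  rw [← integrableOn_univ, ← Iio_union_Ici_of_le (le_refl (0:ℝ))]
  refine IntegrableOn.union ?_ (Iff.mpr integrableOn_Ici_iff_integrableOn_Ioi h)
  apply integrableOn_Iio_of_neg
  have : (fun x => f (-x)) = f := funext he
  rw [this]
  exact h

lemma integrableOn_F1_Ioi : IntegrableOn F1 (Ioi (0:ℝ)) := integrableOn_h (by norm_num) le_rfl

lemma integrableOn_F2_Ioi : IntegrableOn F2 (Ioi (0:ℝ)) := by
  refine (integrableOn_h (n := 3) (by norm_num) (by norm_num)).congr_fun ?_ measurableSet_Ioi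
  intro x hx
  rw [mem_Ioi] at hx
  unfold F2
  rw [abs_of_pos hx]
  field_simp

lemma integrable_F1 : Integrable F1 := integrable_of_even F1_even integrableOn_F1_Ioi
lemma integrable_F2 : Integrable F2 := integrable_of_even F2_even integrableOn_F2_Ioi

lemma integral_F1 : ∫ x, F1 x = π / 3 := by
  rw [integral_even integrable_F1 F1_even]
  unfold F1
  rw [IoiH4]
  ring

lemma integral_F2 : ∫ x, F2 x = 2 * Real.log 2 := by
  rw [integral_even integrable_F2 F2_even]
  have : ∫ x in Ioi (0:ℝ), F2 x = ∫ x in Ioi (0:ℝ), (1 - Real.cos x)^2 / x ^ 3 := by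
    refine setIntegral_congr_fun measurableSet_Ioi (fun x hx => ?_)
    rw [mem_Ioi] at hx
    unfold F2
    rw [abs_of_pos hx]
    field_simp
  rw [this, IoiH3]

end FinalPieces

/-- `g_A(x) = (3/(πA)) ((1-cos(Ax))/(Ax²))²` is a probability
density on `ℝ` and has first absolute moment `6 ln 2/(π A)`. -/
theorem gA_is_density_with_first_moment (A : ℝ) (hA : 0 < A) :
    (∀ x : ℝ, 0 ≤ (3 / (Real.pi * A)) * ((1 - Real.cos (A * x)) / (A * x^2))^2)
    ∧ (∫ x : ℝ, (3 / (Real.pi * A)) * ((1 - Real.cos (A * x)) / (A * x^2))^2) = 1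
    ∧ (∫ x : ℝ, |x| * ((3 / (Real.pi * A)) * ((1 - Real.cos (A * x)) / (A * x^2))^2))
        = 6 * Real.log 2 / (Real.pi * A) := by
  have hπ : (0:ℝ) < Real.pi := Real.pi_pos
  have hA0 : A ≠ 0 := hA.ne'
  refine ⟨?_, ?_, ?_⟩
  · intro x
    exact mul_nonneg (div_nonneg (by norm_num) (mul_nonneg hπ.le hA.le)) (sq_nonneg _)
  · have hptw : ∀ x : ℝ, (3 / (Real.pi * A)) * ((1 - Real.cos (A * x)) / (A * x^2))^2
        = (3 / (Real.pi * A) * A^2) * F1 (A * x) := by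
      intro x
      unfold F1
      rcases eq_or_ne x 0 with rfl | hx
      · simp
      · field_simp
    simp_rw [hptw]
    rw [integral_const_mul, Measure.integral_comp_mul_left F1 A, integral_F1, smul_eq_mul,
      abs_of_pos (inv_pos.mpr hA)]
    field_simp
  · have hptw : ∀ x : ℝ, |x| * ((3 / (Real.pi * A)) * ((1 - Real.cos (A * x)) / (A * x^2))^2)
        = (3 / (Real.pi * A) * A) * F2 (A * x) := by
      intro x
      unfold F2
      rcases eq_or_ne x 0 with rfl | hx
      · simp
      · rw [abs_mul, abs_of_pos hA]
        field_simp [abs_ne_zero.mpr hx]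
    simp_rw [hptw]
    rw [integral_const_mul, Measure.integral_comp_mul_left F2 A, integral_F2, smul_eq_mul,
      abs_of_pos (inv_pos.mpr hA)]
    field_simp
    ring
end

section
/- For all integers $n \ge 2$, all $1 \le k \le n/2$, and all real $z$: $\left| \frac{1}{\sqrt{n-k}} e^{-z^2/(2(n-k))} - \frac{1}{\sqrt{n}} e^{-z^2/(2n)} \right| \le \frac{2^{3/2}}{e} \cdot \frac{k}{n^{3/2}}$. -/
open Real

private lemma heat_aux (s t E v w kk : ℝ) (hs0 : 0 < s) (ht0 : 0 < t) (hts : t ≤ s)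
    (hk1 : 1 ≤ kk) (hk2 : s^2 - t^2 = kk) (ht2' : s^2/2 ≤ t^2)
    (hv0 : 0 ≤ v) (hvw : v ≤ w) (hwv : w - v = v * (kk/t^2)) (hE_def : E = Real.exp 1) :
    |(1/t) * Real.exp (-w) - (1/s) * Real.exp (-v)|
      ≤ 2 * Real.sqrt 2 / E * (kk / s^3) := by
  have hE : (0:ℝ) < E := hE_def ▸ Real.exp_pos 1
  have hE3 : E ≤ 2.7182818286 := hE_def ▸ Real.exp_one_lt_d9.le
  have hr2 : (0:ℝ) < Real.sqrt 2 := Real.sqrt_pos.2 (by norm_num)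
  have hr2' : (Real.sqrt 2)^2 = 2 := Real.sq_sqrt (by norm_num)
  have hr14 : (1.414:ℝ) ≤ Real.sqrt 2 := by nlinarith [hr2', hr2.le]
  have hst : s ≤ Real.sqrt 2 * t := by
    have h := Real.sqrt_le_sqrt (show s^2 ≤ 2*t^2 by linarith)
    rwa [Real.sqrt_sq hs0.le, Real.sqrt_mul (by norm_num : (0:ℝ) ≤ 2), Real.sqrt_sq ht0.le] at h
  have hexpv1 : Real.exp (-v) ≤ 1 := Real.exp_le_one_iff.2 (by linarith)
  set P := (1/t - 1/s) * Real.exp (-v) with hP_def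
  set Q := (1/t) * (Real.exp (-v) - Real.exp (-w)) with hQ_def
  have hsplit : (1/t) * Real.exp (-w) - (1/s) * Real.exp (-v) = P - Q := by
    rw [hP_def, hQ_def]; ring
  set C := 2 * Real.sqrt 2 / E * (kk / s^3) with hC_def
  have hdiffnn : 0 ≤ 1/t - 1/s := by
    have : 1/s ≤ 1/t := one_div_le_one_div_of_le ht0 hts
    linarith
  have hP0 : 0 ≤ P := mul_nonneg hdiffnn (Real.exp_pos _).le
  have hQ0 : 0 ≤ Q := by
    have hexp : Real.exp (-w) ≤ Real.exp (-v) := Real.exp_le_exp.2 (by linarith)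
    exact mul_nonneg (by positivity) (by linarith)
  have hPb : P ≤ C := by
    have h1 : P ≤ 1/t - 1/s := by
      calc (1/t - 1/s) * Real.exp (-v) ≤ (1/t - 1/s) * 1 :=
            mul_le_mul_of_nonneg_left hexpv1 hdiffnn
        _ = 1/t - 1/s := mul_one _
    have h3 : 1/t - 1/s ≤ C := by
      have hD0 : 0 < t*s*(s+t) := by positivity
      have hdiff : 1/t - 1/s = kk / (t*s*(s+t)) := by
        rw [← hk2]; field_simp; ring
      rw [hdiff, hC_def]
      have hre : 2*Real.sqrt 2/E*(kk/s^3) = (2*Real.sqrt 2*kk)/(E*s^3) := by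
        field_simp
      rw [hre, div_le_div_iff₀ hD0 (by positivity)]
      have hg1 : 2*s^3 ≤ 2*Real.sqrt 2*t*s^2 := by
        have h := mul_le_mul_of_nonneg_left hst (by positivity : (0:ℝ) ≤ 2*s^2)
        linarith [h]
      have hg2 : Real.sqrt 2*s^3 ≤ 2*Real.sqrt 2*t^2*s := by
        have h := mul_le_mul_of_nonneg_left ht2' (by positivity : (0:ℝ) ≤ 2*Real.sqrt 2*s)
        linarith [h]
      have hg3 : E*s^3 ≤ 2*s^3 + Real.sqrt 2*s^3 := by
        have h := mul_nonneg (by linarith : (0:ℝ) ≤ 2+Real.sqrt 2-E) (pow_pos hs0 3).le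
        linarith [h]
      have hg : E*s^3 ≤ 2*Real.sqrt 2*(t*s*(s+t)) := by
        have hexp : 2*Real.sqrt 2*(t*s*(s+t)) = 2*Real.sqrt 2*t*s^2 + 2*Real.sqrt 2*t^2*s := by
          ring
        linarith
      have h := mul_le_mul_of_nonneg_left hg (by linarith : (0:ℝ) ≤ kk)
      linarith [h]
    linarith
  have hQb : Q ≤ C := by
    have hsplitw : Real.exp (-w) = Real.exp (-v) * Real.exp (-(w - v)) := by
      rw [← Real.exp_add]; ring_nf
    have h1me : 1 - Real.exp (-(w - v)) ≤ w - v := by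
      have := Real.add_one_le_exp (-(w - v))
      linarith
    have hve : v * Real.exp (-v) ≤ 1/E := by
      have h := Real.add_one_le_exp (v - 1)
      have h4 : Real.exp (v-1) * Real.exp (-v) = 1/E := by
        rw [← Real.exp_add, hE_def, one_div, ← Real.exp_neg]
        congr 1
        ring
      have h3 := (Real.exp_pos (-v)).le
      calc v * Real.exp (-v) ≤ Real.exp (v-1) * Real.exp (-v) :=
            mul_le_mul_of_nonneg_right (by linarith) h3
        _ = 1/E := h4
    have hQ1 : Q ≤ (1/t) * (Real.exp (-v) * (w - v)) := by
      rw [hQ_def, hsplitw]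
      have h1t : (0:ℝ) < 1/t := by positivity
      have he0 := (Real.exp_pos (-v)).le
      have key : Real.exp (-v) - Real.exp (-v) * Real.exp (-(w-v))
          = Real.exp (-v) * (1 - Real.exp (-(w-v))) := by ring
      rw [key]
      exact mul_le_mul_of_nonneg_left (mul_le_mul_of_nonneg_left h1me he0) h1t.le
    have hQ3 : Q ≤ (1/E) * (kk/(t*t^2)) := by
      have hQ2 : (1/t) * (Real.exp (-v) * (w - v)) = (v * Real.exp (-v)) * (kk/(t*t^2)) := by
        rw [hwv]; field_simp
      rw [hQ2] at hQ1
      have hpos : (0:ℝ) ≤ kk/(t*t^2) := by positivity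
      calc Q ≤ (v * Real.exp (-v)) * (kk/(t*t^2)) := hQ1
        _ ≤ (1/E) * (kk/(t*t^2)) := mul_le_mul_of_nonneg_right hve hpos
    have hQ4 : (1/E) * (kk/(t*t^2)) ≤ C := by
      have hta : t * t^2 = t^3 := by ring
      have hcube : s^3 ≤ 2*Real.sqrt 2*t^3 := by
        have h := pow_le_pow_left₀ hs0.le hst 3
        have hr3 : (Real.sqrt 2)^3 = 2*Real.sqrt 2 := by rw [pow_succ, hr2']
        have h2 : (Real.sqrt 2 * t)^3 = 2*Real.sqrt 2*t^3 := by rw [mul_pow, hr3]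
        linarith
      rw [hta, hC_def]
      have hre : 2*Real.sqrt 2/E*(kk/s^3) = (2*Real.sqrt 2*kk)/(E*s^3) := by
        field_simp
      have hre2 : (1/E) * (kk/t^3) = kk/(E*t^3) := by
        field_simp
      rw [hre, hre2, div_le_div_iff₀ (by positivity) (by positivity)]
      have h := mul_le_mul_of_nonneg_left hcube (by positivity : (0:ℝ) ≤ E*kk)
      linarith [h]
    linarith
  rw [hsplit, abs_le]
  constructor <;> [linarith; linarith]

/-- continuity of the Gaussian heat kernel in time:
`|(n-k)^{-1/2} e^{-z²/(2(n-k))} - n^{-1/2} e^{-z²/(2n)}| ≤ (2^{3/2}/e) k n^{-3/2}`. -/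
theorem heat_kernel_time_continuity (n k : ℕ) (hn : 2 ≤ n) (hk : 1 ≤ k)
    (hkn : (k : ℝ) ≤ n / 2) (z : ℝ) :
    |(1 / Real.sqrt (n - k : ℝ)) * Real.exp (-z^2 / (2 * ((n : ℝ) - k)))
        - (1 / Real.sqrt n) * Real.exp (-z^2 / (2 * n))|
      ≤ (2 : ℝ) ^ ((3 : ℝ)/2) / Real.exp 1 * (k / (n : ℝ) ^ ((3 : ℝ)/2)) := by
  have hn2 : (2:ℝ) ≤ n := by exact_mod_cast hn
  have hn0 : (0:ℝ) < n := by linarith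
  have hk1 : (1:ℝ) ≤ k := by exact_mod_cast hk
  have ha2 : (n:ℝ)/2 ≤ (n:ℝ) - k := by linarith
  have ha0 : (0:ℝ) < (n:ℝ) - k := by linarith
  have hs0 : 0 < Real.sqrt n := Real.sqrt_pos.2 hn0
  have ht0 : 0 < Real.sqrt ((n:ℝ) - k) := Real.sqrt_pos.2 ha0
  have hs2 : (Real.sqrt n)^2 = n := Real.sq_sqrt hn0.le
  have ht2 : (Real.sqrt ((n:ℝ) - k))^2 = (n:ℝ) - k := Real.sq_sqrt ha0.le
  have hrpow : (n:ℝ) ^ ((3:ℝ)/2) = (Real.sqrt n)^3 := by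
    rw [Real.sqrt_eq_rpow, ← Real.rpow_natCast ((n:ℝ)^((1:ℝ)/2)) 3,
      ← Real.rpow_mul hn0.le]
    norm_num
  have hrpow2 : (2:ℝ) ^ ((3:ℝ)/2) = 2 * Real.sqrt 2 := by
    rw [show (3:ℝ)/2 = 1 + 1/2 by ring, Real.rpow_add (by norm_num), Real.rpow_one,
      ← Real.sqrt_eq_rpow]
  have hA : -z^2 / (2 * ((n:ℝ) - (k:ℝ))) = -(z^2/(2*((n:ℝ)-k))) := by ring
  have hB : -z^2 / (2 * (n:ℝ)) = -(z^2/(2*(n:ℝ))) := by ring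
  have hcast : ((n:ℝ) - (k:ℕ) : ℝ) = (n:ℝ) - k := rfl
  rw [hrpow, hrpow2, hA, hB]
  exact heat_aux (Real.sqrt n) (Real.sqrt ((n:ℝ)-k)) (Real.exp 1)
    (z^2/(2*(n:ℝ))) (z^2/(2*((n:ℝ)-k))) k hs0 ht0
    (Real.sqrt_le_sqrt (by linarith)) hk1 (by rw [hs2, ht2]; ring)
    (by rw [hs2, ht2]; linarith) (by positivity)
    (div_le_div_of_nonneg_left (by positivity) (by linarith) (by linarith))
    (by rw [ht2]; field_simp; ring) rfl
end
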